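/- Let φ(ℕ) := {n ∈ ℕ, n ≥ 1 | ∃ x ≥ 1 with φ(x) = n} be the set of values of Euler's totient function. Then M(φ(ℕ)) = {1, 2, 4, 6, 8, 30, 70, 500, 900, 990, 5590, 9550, 555555555550}, where the last element is the number consisting of eleven digits 5 followed by a digit 0. -/

import Mathlib

set_option maxRecDepth 10000
set_option maxHeartbeats 1000000

/-- `Subseq x y` means the decimal digit string of `x` is a subsequence of that of `y`. -/
def Subseq (x y : ℕ) : Prop := (Nat.digits 10 x).Sublist (Nat.digits 10 y)

/-- The minimal set of `S`: elements of `S` containing no smaller element of `S`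
as a subsequence of their decimal digits. -/
def minimalSet (S : Set ℕ) : Set ℕ := {s ∈ S | ¬ ∃ n ∈ S, n < s ∧ Subseq n s}

theorem bigprime : Nat.Prime 555555555551 := by
  have hbp56 : (17 : ZMod 555555555551) ^ (1:ℕ) = 17 := pow_one _
  have hbp55 : (17 : ZMod 555555555551) ^ (2:ℕ) = 289 := by rw [(pow_mul 17 1 2 : (17 : ZMod 555555555551) ^ (2:ℕ) = _), hbp56]; decide
  have hbp54 : (17 : ZMod 555555555551) ^ (4:ℕ) = 83521 := by rw [(pow_mul 17 2 2 : (17 : ZMod 555555555551) ^ (4:ℕ) = _), hbp55]; decide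
  have hbp53 : (17 : ZMod 555555555551) ^ (8:ℕ) = 6975757441 := by rw [(pow_mul 17 4 2 : (17 : ZMod 555555555551) ^ (8:ℕ) = _), hbp54]; decide
  have hbp52 : (17 : ZMod 555555555551) ^ (16:ℕ) = 209399223586 := by rw [(pow_mul 17 8 2 : (17 : ZMod 555555555551) ^ (16:ℕ) = _), hbp53]; decide
  have hbp51 : (17 : ZMod 555555555551) ^ (32:ℕ) = 445839251737 := by rw [(pow_mul 17 16 2 : (17 : ZMod 555555555551) ^ (32:ℕ) = _), hbp52]; decide
  have hbp50 : (17 : ZMod 555555555551) ^ (64:ℕ) = 482437596416 := by rw [(pow_mul 17 32 2 : (17 : ZMod 555555555551) ^ (64:ℕ) = _), hbp51]; decide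
  have hbp49 : (17 : ZMod 555555555551) ^ (128:ℕ) = 333591305219 := by rw [(pow_mul 17 64 2 : (17 : ZMod 555555555551) ^ (128:ℕ) = _), hbp50]; decide
  have hbp48 : (17 : ZMod 555555555551) ^ (129:ℕ) = 115496633213 := by rw [(pow_succ 17 128 : (17 : ZMod 555555555551) ^ (129:ℕ) = _), hbp49]; decide
  have hbp47 : (17 : ZMod 555555555551) ^ (258:ℕ) = 314305042759 := by rw [(pow_mul 17 129 2 : (17 : ZMod 555555555551) ^ (258:ℕ) = _), hbp48]; decide
  have hbp46 : (17 : ZMod 555555555551) ^ (516:ℕ) = 102432698853 := by rw [(pow_mul 17 258 2 : (17 : ZMod 555555555551) ^ (516:ℕ) = _), hbp47]; decide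
  have hbp45 : (17 : ZMod 555555555551) ^ (517:ℕ) = 74689213848 := by rw [(pow_succ 17 516 : (17 : ZMod 555555555551) ^ (517:ℕ) = _), hbp46]; decide
  have hbp44 : (17 : ZMod 555555555551) ^ (1034:ℕ) = 278018492157 := by rw [(pow_mul 17 517 2 : (17 : ZMod 555555555551) ^ (1034:ℕ) = _), hbp45]; decide
  have hbp43 : (17 : ZMod 555555555551) ^ (2068:ℕ) = 219016958232 := by rw [(pow_mul 17 1034 2 : (17 : ZMod 555555555551) ^ (2068:ℕ) = _), hbp44]; decide
  have hbp42 : (17 : ZMod 555555555551) ^ (2069:ℕ) = 389954956638 := by rw [(pow_succ 17 2068 : (17 : ZMod 555555555551) ^ (2069:ℕ) = _), hbp43]; decide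
  have hbp41 : (17 : ZMod 555555555551) ^ (4138:ℕ) = 13614404570 := by rw [(pow_mul 17 2069 2 : (17 : ZMod 555555555551) ^ (4138:ℕ) = _), hbp42]; decide
  have hbp40 : (17 : ZMod 555555555551) ^ (4139:ℕ) = 231444877690 := by rw [(pow_succ 17 4138 : (17 : ZMod 555555555551) ^ (4139:ℕ) = _), hbp41]; decide
  have hbp39 : (17 : ZMod 555555555551) ^ (8278:ℕ) = 489418044764 := by rw [(pow_mul 17 4139 2 : (17 : ZMod 555555555551) ^ (8278:ℕ) = _), hbp40]; decide
  have hbp38 : (17 : ZMod 555555555551) ^ (16556:ℕ) = 358631778320 := by rw [(pow_mul 17 8278 2 : (17 : ZMod 555555555551) ^ (16556:ℕ) = _), hbp39]; decide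
  have hbp37 : (17 : ZMod 555555555551) ^ (33112:ℕ) = 353612725591 := by rw [(pow_mul 17 16556 2 : (17 : ZMod 555555555551) ^ (33112:ℕ) = _), hbp38]; decide
  have hbp36 : (17 : ZMod 555555555551) ^ (33113:ℕ) = 455860779537 := by rw [(pow_succ 17 33112 : (17 : ZMod 555555555551) ^ (33113:ℕ) = _), hbp37]; decide
  have hbp35 : (17 : ZMod 555555555551) ^ (66226:ℕ) = 118685480340 := by rw [(pow_mul 17 33113 2 : (17 : ZMod 555555555551) ^ (66226:ℕ) = _), hbp36]; decide
  have hbp34 : (17 : ZMod 555555555551) ^ (66227:ℕ) = 350986499127 := by rw [(pow_succ 17 66226 : (17 : ZMod 555555555551) ^ (66227:ℕ) = _), hbp35]; decide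
  have hbp33 : (17 : ZMod 555555555551) ^ (132454:ℕ) = 437742247203 := by rw [(pow_mul 17 66227 2 : (17 : ZMod 555555555551) ^ (132454:ℕ) = _), hbp34]; decide
  have hbp32 : (17 : ZMod 555555555551) ^ (264908:ℕ) = 125853400331 := by rw [(pow_mul 17 132454 2 : (17 : ZMod 555555555551) ^ (264908:ℕ) = _), hbp33]; decide
  have hbp31 : (17 : ZMod 555555555551) ^ (264909:ℕ) = 472841138974 := by rw [(pow_succ 17 264908 : (17 : ZMod 555555555551) ^ (264909:ℕ) = _), hbp32]; decide
  have hbp30 : (17 : ZMod 555555555551) ^ (529818:ℕ) = 285149685102 := by rw [(pow_mul 17 264909 2 : (17 : ZMod 555555555551) ^ (529818:ℕ) = _), hbp31]; decide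
  have hbp29 : (17 : ZMod 555555555551) ^ (529819:ℕ) = 403100202326 := by rw [(pow_succ 17 529818 : (17 : ZMod 555555555551) ^ (529819:ℕ) = _), hbp30]; decide
  have hbp28 : (17 : ZMod 555555555551) ^ (1059638:ℕ) = 483440838717 := by rw [(pow_mul 17 529819 2 : (17 : ZMod 555555555551) ^ (1059638:ℕ) = _), hbp29]; decide
  have hbp27 : (17 : ZMod 555555555551) ^ (2119276:ℕ) = 201758460215 := by rw [(pow_mul 17 1059638 2 : (17 : ZMod 555555555551) ^ (2119276:ℕ) = _), hbp28]; decide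
  have hbp26 : (17 : ZMod 555555555551) ^ (4238552:ℕ) = 328197618292 := by rw [(pow_mul 17 2119276 2 : (17 : ZMod 555555555551) ^ (4238552:ℕ) = _), hbp27]; decide
  have hbp25 : (17 : ZMod 555555555551) ^ (8477104:ℕ) = 91251812488 := by rw [(pow_mul 17 4238552 2 : (17 : ZMod 555555555551) ^ (8477104:ℕ) = _), hbp26]; decide
  have hbp24 : (17 : ZMod 555555555551) ^ (8477105:ℕ) = 440169701194 := by rw [(pow_succ 17 8477104 : (17 : ZMod 555555555551) ^ (8477105:ℕ) = _), hbp25]; decide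
  have hbp23 : (17 : ZMod 555555555551) ^ (16954210:ℕ) = 248434270055 := by rw [(pow_mul 17 8477105 2 : (17 : ZMod 555555555551) ^ (16954210:ℕ) = _), hbp24]; decide
  have hbp22 : (17 : ZMod 555555555551) ^ (33908420:ℕ) = 488992534857 := by rw [(pow_mul 17 16954210 2 : (17 : ZMod 555555555551) ^ (33908420:ℕ) = _), hbp23]; decide
  have hbp21 : (17 : ZMod 555555555551) ^ (67816840:ℕ) = 57314565683 := by rw [(pow_mul 17 33908420 2 : (17 : ZMod 555555555551) ^ (67816840:ℕ) = _), hbp22]; decide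
  have hbp20 : (17 : ZMod 555555555551) ^ (135633680:ℕ) = 13413479448 := by rw [(pow_mul 17 67816840 2 : (17 : ZMod 555555555551) ^ (135633680:ℕ) = _), hbp21]; decide
  have hbp19 : (17 : ZMod 555555555551) ^ (271267360:ℕ) = 347838184879 := by rw [(pow_mul 17 135633680 2 : (17 : ZMod 555555555551) ^ (271267360:ℕ) = _), hbp20]; decide
  have hbp18 : (17 : ZMod 555555555551) ^ (271267361:ℕ) = 357693587433 := by rw [(pow_succ 17 271267360 : (17 : ZMod 555555555551) ^ (271267361:ℕ) = _), hbp19]; decide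
  have hbp17 : (17 : ZMod 555555555551) ^ (542534722:ℕ) = 71695423254 := by rw [(pow_mul 17 271267361 2 : (17 : ZMod 555555555551) ^ (542534722:ℕ) = _), hbp18]; decide
  have hbp16 : (17 : ZMod 555555555551) ^ (1085069444:ℕ) = 56798309428 := by rw [(pow_mul 17 542534722 2 : (17 : ZMod 555555555551) ^ (1085069444:ℕ) = _), hbp17]; decide
  have hbp15 : (17 : ZMod 555555555551) ^ (2170138888:ℕ) = 16398391517 := by rw [(pow_mul 17 1085069444 2 : (17 : ZMod 555555555551) ^ (2170138888:ℕ) = _), hbp16]; decide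
  have hbp14 : (17 : ZMod 555555555551) ^ (4340277776:ℕ) = 458133711800 := by rw [(pow_mul 17 2170138888 2 : (17 : ZMod 555555555551) ^ (4340277776:ℕ) = _), hbp15]; decide
  have hbp13 : (17 : ZMod 555555555551) ^ (4340277777:ℕ) = 10495322886 := by rw [(pow_succ 17 4340277776 : (17 : ZMod 555555555551) ^ (4340277777:ℕ) = _), hbp14]; decide
  have hbp12 : (17 : ZMod 555555555551) ^ (8680555554:ℕ) = 260076391552 := by rw [(pow_mul 17 4340277777 2 : (17 : ZMod 555555555551) ^ (8680555554:ℕ) = _), hbp13]; decide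
  have hbp11 : (17 : ZMod 555555555551) ^ (8680555555:ℕ) = 532409767527 := by rw [(pow_succ 17 8680555554 : (17 : ZMod 555555555551) ^ (8680555555:ℕ) = _), hbp12]; decide
  have hbp10 : (17 : ZMod 555555555551) ^ (17361111110:ℕ) = 478557012321 := by rw [(pow_mul 17 8680555555 2 : (17 : ZMod 555555555551) ^ (17361111110:ℕ) = _), hbp11]; decide
  have hbp9 : (17 : ZMod 555555555551) ^ (34722222220:ℕ) = 146350348863 := by rw [(pow_mul 17 17361111110 2 : (17 : ZMod 555555555551) ^ (34722222220:ℕ) = _), hbp10]; decide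
  have hbp8 : (17 : ZMod 555555555551) ^ (34722222221:ℕ) = 265733708467 := by rw [(pow_succ 17 34722222220 : (17 : ZMod 555555555551) ^ (34722222221:ℕ) = _), hbp9]; decide
  have hbp7 : (17 : ZMod 555555555551) ^ (69444444442:ℕ) = 92474490270 := by rw [(pow_mul 17 34722222221 2 : (17 : ZMod 555555555551) ^ (69444444442:ℕ) = _), hbp8]; decide
  have hbp6 : (17 : ZMod 555555555551) ^ (69444444443:ℕ) = 460955223488 := by rw [(pow_succ 17 69444444442 : (17 : ZMod 555555555551) ^ (69444444443:ℕ) = _), hbp7]; decide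
  have hbp5 : (17 : ZMod 555555555551) ^ (138888888886:ℕ) = 392138352032 := by rw [(pow_mul 17 69444444443 2 : (17 : ZMod 555555555551) ^ (138888888886:ℕ) = _), hbp6]; decide
  have hbp4 : (17 : ZMod 555555555551) ^ (138888888887:ℕ) = 555240873483 := by rw [(pow_succ 17 138888888886 : (17 : ZMod 555555555551) ^ (138888888887:ℕ) = _), hbp5]; decide
  have hbp3 : (17 : ZMod 555555555551) ^ (277777777774:ℕ) = 359477124180 := by rw [(pow_mul 17 138888888887 2 : (17 : ZMod 555555555551) ^ (277777777774:ℕ) = _), hbp4]; decide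
  have hbp2 : (17 : ZMod 555555555551) ^ (277777777775:ℕ) = 555555555550 := by rw [(pow_succ 17 277777777774 : (17 : ZMod 555555555551) ^ (277777777775:ℕ) = _), hbp3]; decide
  have hbp1 : (17 : ZMod 555555555551) ^ (555555555550:ℕ) = 1 := by rw [(pow_mul 17 277777777775 2 : (17 : ZMod 555555555551) ^ (555555555550:ℕ) = _), hbp2]; decide
  have hbp110 : (17 : ZMod 555555555551) ^ (3:ℕ) = 4913 := by rw [(pow_succ 17 2 : (17 : ZMod 555555555551) ^ (3:ℕ) = _), hbp55]; decide
  have hbp109 : (17 : ZMod 555555555551) ^ (6:ℕ) = 24137569 := by rw [(pow_mul 17 3 2 : (17 : ZMod 555555555551) ^ (6:ℕ) = _), hbp110]; decide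
  have hbp108 : (17 : ZMod 555555555551) ^ (12:ℕ) = 400015012313 := by rw [(pow_mul 17 6 2 : (17 : ZMod 555555555551) ^ (12:ℕ) = _), hbp109]; decide
  have hbp107 : (17 : ZMod 555555555551) ^ (24:ℕ) = 414973425931 := by rw [(pow_mul 17 12 2 : (17 : ZMod 555555555551) ^ (24:ℕ) = _), hbp108]; decide
  have hbp106 : (17 : ZMod 555555555551) ^ (25:ℕ) = 387881574215 := by rw [(pow_succ 17 24 : (17 : ZMod 555555555551) ^ (25:ℕ) = _), hbp107]; decide
  have hbp105 : (17 : ZMod 555555555551) ^ (50:ℕ) = 73593547615 := by rw [(pow_mul 17 25 2 : (17 : ZMod 555555555551) ^ (50:ℕ) = _), hbp106]; decide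
  have hbp104 : (17 : ZMod 555555555551) ^ (51:ℕ) = 139979198353 := by rw [(pow_succ 17 50 : (17 : ZMod 555555555551) ^ (51:ℕ) = _), hbp105]; decide
  have hbp103 : (17 : ZMod 555555555551) ^ (102:ℕ) = 42523488910 := by rw [(pow_mul 17 51 2 : (17 : ZMod 555555555551) ^ (102:ℕ) = _), hbp104]; decide
  have hbp102 : (17 : ZMod 555555555551) ^ (103:ℕ) = 167343755919 := by rw [(pow_succ 17 102 : (17 : ZMod 555555555551) ^ (103:ℕ) = _), hbp103]; decide
  have hbp101 : (17 : ZMod 555555555551) ^ (206:ℕ) = 307479782250 := by rw [(pow_mul 17 103 2 : (17 : ZMod 555555555551) ^ (206:ℕ) = _), hbp102]; decide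
  have hbp100 : (17 : ZMod 555555555551) ^ (412:ℕ) = 504896579963 := by rw [(pow_mul 17 206 2 : (17 : ZMod 555555555551) ^ (412:ℕ) = _), hbp101]; decide
  have hbp99 : (17 : ZMod 555555555551) ^ (413:ℕ) = 249908526106 := by rw [(pow_succ 17 412 : (17 : ZMod 555555555551) ^ (413:ℕ) = _), hbp100]; decide
  have hbp98 : (17 : ZMod 555555555551) ^ (826:ℕ) = 429852993329 := by rw [(pow_mul 17 413 2 : (17 : ZMod 555555555551) ^ (826:ℕ) = _), hbp99]; decide
  have hbp97 : (17 : ZMod 555555555551) ^ (827:ℕ) = 85278664430 := by rw [(pow_succ 17 826 : (17 : ZMod 555555555551) ^ (827:ℕ) = _), hbp98]; decide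
  have hbp96 : (17 : ZMod 555555555551) ^ (1654:ℕ) = 357514653208 := by rw [(pow_mul 17 827 2 : (17 : ZMod 555555555551) ^ (1654:ℕ) = _), hbp97]; decide
  have hbp95 : (17 : ZMod 555555555551) ^ (1655:ℕ) = 522193549026 := by rw [(pow_succ 17 1654 : (17 : ZMod 555555555551) ^ (1655:ℕ) = _), hbp96]; decide
  have hbp94 : (17 : ZMod 555555555551) ^ (3310:ℕ) = 494380479263 := by rw [(pow_mul 17 1655 2 : (17 : ZMod 555555555551) ^ (3310:ℕ) = _), hbp95]; decide
  have hbp93 : (17 : ZMod 555555555551) ^ (3311:ℕ) = 71134814206 := by rw [(pow_succ 17 3310 : (17 : ZMod 555555555551) ^ (3311:ℕ) = _), hbp94]; decide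
  have hbp92 : (17 : ZMod 555555555551) ^ (6622:ℕ) = 496966070461 := by rw [(pow_mul 17 3311 2 : (17 : ZMod 555555555551) ^ (6622:ℕ) = _), hbp93]; decide
  have hbp91 : (17 : ZMod 555555555551) ^ (13244:ℕ) = 361702897977 := by rw [(pow_mul 17 6622 2 : (17 : ZMod 555555555551) ^ (13244:ℕ) = _), hbp92]; decide
  have hbp90 : (17 : ZMod 555555555551) ^ (13245:ℕ) = 37838154548 := by rw [(pow_succ 17 13244 : (17 : ZMod 555555555551) ^ (13245:ℕ) = _), hbp91]; decide
  have hbp89 : (17 : ZMod 555555555551) ^ (26490:ℕ) = 165628792563 := by rw [(pow_mul 17 13245 2 : (17 : ZMod 555555555551) ^ (26490:ℕ) = _), hbp90]; decide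
  have hbp88 : (17 : ZMod 555555555551) ^ (52980:ℕ) = 546678308203 := by rw [(pow_mul 17 26490 2 : (17 : ZMod 555555555551) ^ (52980:ℕ) = _), hbp89]; decide
  have hbp87 : (17 : ZMod 555555555551) ^ (52981:ℕ) = 404642350635 := by rw [(pow_succ 17 52980 : (17 : ZMod 555555555551) ^ (52981:ℕ) = _), hbp88]; decide
  have hbp86 : (17 : ZMod 555555555551) ^ (105962:ℕ) = 427582111704 := by rw [(pow_mul 17 52981 2 : (17 : ZMod 555555555551) ^ (105962:ℕ) = _), hbp87]; decide
  have hbp85 : (17 : ZMod 555555555551) ^ (105963:ℕ) = 46673676805 := by rw [(pow_succ 17 105962 : (17 : ZMod 555555555551) ^ (105963:ℕ) = _), hbp86]; decide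
  have hbp84 : (17 : ZMod 555555555551) ^ (211926:ℕ) = 404347040184 := by rw [(pow_mul 17 105963 2 : (17 : ZMod 555555555551) ^ (211926:ℕ) = _), hbp85]; decide
  have hbp83 : (17 : ZMod 555555555551) ^ (211927:ℕ) = 207233016516 := by rw [(pow_succ 17 211926 : (17 : ZMod 555555555551) ^ (211927:ℕ) = _), hbp84]; decide
  have hbp82 : (17 : ZMod 555555555551) ^ (423854:ℕ) = 228437623514 := by rw [(pow_mul 17 211927 2 : (17 : ZMod 555555555551) ^ (423854:ℕ) = _), hbp83]; decide
  have hbp81 : (17 : ZMod 555555555551) ^ (423855:ℕ) = 550106266432 := by rw [(pow_succ 17 423854 : (17 : ZMod 555555555551) ^ (423855:ℕ) = _), hbp82]; decide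
  have hbp80 : (17 : ZMod 555555555551) ^ (847710:ℕ) = 236028626458 := by rw [(pow_mul 17 423855 2 : (17 : ZMod 555555555551) ^ (847710:ℕ) = _), hbp81]; decide
  have hbp79 : (17 : ZMod 555555555551) ^ (1695420:ℕ) = 329137850550 := by rw [(pow_mul 17 847710 2 : (17 : ZMod 555555555551) ^ (1695420:ℕ) = _), hbp80]; decide
  have hbp78 : (17 : ZMod 555555555551) ^ (1695421:ℕ) = 39787903840 := by rw [(pow_succ 17 1695420 : (17 : ZMod 555555555551) ^ (1695421:ℕ) = _), hbp79]; decide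
  have hbp77 : (17 : ZMod 555555555551) ^ (3390842:ℕ) = 327401312725 := by rw [(pow_mul 17 1695421 2 : (17 : ZMod 555555555551) ^ (3390842:ℕ) = _), hbp78]; decide
  have hbp76 : (17 : ZMod 555555555551) ^ (6781684:ℕ) = 487773761691 := by rw [(pow_mul 17 3390842 2 : (17 : ZMod 555555555551) ^ (6781684:ℕ) = _), hbp77]; decide
  have hbp75 : (17 : ZMod 555555555551) ^ (13563368:ℕ) = 28318657658 := by rw [(pow_mul 17 6781684 2 : (17 : ZMod 555555555551) ^ (13563368:ℕ) = _), hbp76]; decide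
  have hbp74 : (17 : ZMod 555555555551) ^ (27126736:ℕ) = 446466894096 := by rw [(pow_mul 17 13563368 2 : (17 : ZMod 555555555551) ^ (27126736:ℕ) = _), hbp75]; decide
  have hbp73 : (17 : ZMod 555555555551) ^ (54253472:ℕ) = 363407694921 := by rw [(pow_mul 17 27126736 2 : (17 : ZMod 555555555551) ^ (54253472:ℕ) = _), hbp74]; decide
  have hbp72 : (17 : ZMod 555555555551) ^ (108506944:ℕ) = 544210115280 := by rw [(pow_mul 17 54253472 2 : (17 : ZMod 555555555551) ^ (108506944:ℕ) = _), hbp73]; decide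
  have hbp71 : (17 : ZMod 555555555551) ^ (217013888:ℕ) = 499439604915 := by rw [(pow_mul 17 108506944 2 : (17 : ZMod 555555555551) ^ (217013888:ℕ) = _), hbp72]; decide
  have hbp70 : (17 : ZMod 555555555551) ^ (434027776:ℕ) = 252255048248 := by rw [(pow_mul 17 217013888 2 : (17 : ZMod 555555555551) ^ (434027776:ℕ) = _), hbp71]; decide
  have hbp69 : (17 : ZMod 555555555551) ^ (434027777:ℕ) = 399446931359 := by rw [(pow_succ 17 434027776 : (17 : ZMod 555555555551) ^ (434027777:ℕ) = _), hbp70]; decide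
  have hbp68 : (17 : ZMod 555555555551) ^ (868055554:ℕ) = 96698631529 := by rw [(pow_mul 17 434027777 2 : (17 : ZMod 555555555551) ^ (868055554:ℕ) = _), hbp69]; decide
  have hbp67 : (17 : ZMod 555555555551) ^ (868055555:ℕ) = 532765624891 := by rw [(pow_succ 17 868055554 : (17 : ZMod 555555555551) ^ (868055555:ℕ) = _), hbp68]; decide
  have hbp66 : (17 : ZMod 555555555551) ^ (1736111110:ℕ) = 47422514859 := by rw [(pow_mul 17 868055555 2 : (17 : ZMod 555555555551) ^ (1736111110:ℕ) = _), hbp67]; decide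
  have hbp65 : (17 : ZMod 555555555551) ^ (1736111111:ℕ) = 250627197052 := by rw [(pow_succ 17 1736111110 : (17 : ZMod 555555555551) ^ (1736111111:ℕ) = _), hbp66]; decide
  have hbp64 : (17 : ZMod 555555555551) ^ (3472222222:ℕ) = 434890002080 := by rw [(pow_mul 17 1736111111 2 : (17 : ZMod 555555555551) ^ (3472222222:ℕ) = _), hbp65]; decide
  have hbp63 : (17 : ZMod 555555555551) ^ (6944444444:ℕ) = 137709144911 := by rw [(pow_mul 17 3472222222 2 : (17 : ZMod 555555555551) ^ (6944444444:ℕ) = _), hbp64]; decide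
  have hbp62 : (17 : ZMod 555555555551) ^ (13888888888:ℕ) = 52078206155 := by rw [(pow_mul 17 6944444444 2 : (17 : ZMod 555555555551) ^ (13888888888:ℕ) = _), hbp63]; decide
  have hbp61 : (17 : ZMod 555555555551) ^ (27777777776:ℕ) = 233808317274 := by rw [(pow_mul 17 13888888888 2 : (17 : ZMod 555555555551) ^ (27777777776:ℕ) = _), hbp62]; decide
  have hbp60 : (17 : ZMod 555555555551) ^ (27777777777:ℕ) = 85852504801 := by rw [(pow_succ 17 27777777776 : (17 : ZMod 555555555551) ^ (27777777777:ℕ) = _), hbp61]; decide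
  have hbp59 : (17 : ZMod 555555555551) ^ (55555555554:ℕ) = 110611845206 := by rw [(pow_mul 17 27777777777 2 : (17 : ZMod 555555555551) ^ (55555555554:ℕ) = _), hbp60]; decide
  have hbp58 : (17 : ZMod 555555555551) ^ (55555555555:ℕ) = 213734701849 := by rw [(pow_succ 17 55555555554 : (17 : ZMod 555555555551) ^ (55555555555:ℕ) = _), hbp59]; decide
  have hbp57 : (17 : ZMod 555555555551) ^ (111111111110:ℕ) = 411076261107 := by rw [(pow_mul 17 55555555555 2 : (17 : ZMod 555555555551) ^ (111111111110:ℕ) = _), hbp58]; decide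
  have hbp143 : (17 : ZMod 555555555551) ^ (48:ℕ) = 323207359447 := by rw [(pow_mul 17 24 2 : (17 : ZMod 555555555551) ^ (48:ℕ) = _), hbp107]; decide
  have hbp142 : (17 : ZMod 555555555551) ^ (96:ℕ) = 447745611747 := by rw [(pow_mul 17 48 2 : (17 : ZMod 555555555551) ^ (96:ℕ) = _), hbp143]; decide
  have hbp141 : (17 : ZMod 555555555551) ^ (97:ℕ) = 389453177536 := by rw [(pow_succ 17 96 : (17 : ZMod 555555555551) ^ (97:ℕ) = _), hbp142]; decide
  have hbp140 : (17 : ZMod 555555555551) ^ (194:ℕ) = 241971117857 := by rw [(pow_mul 17 97 2 : (17 : ZMod 555555555551) ^ (194:ℕ) = _), hbp141]; decide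
  have hbp139 : (17 : ZMod 555555555551) ^ (195:ℕ) = 224620114712 := by rw [(pow_succ 17 194 : (17 : ZMod 555555555551) ^ (195:ℕ) = _), hbp140]; decide
  have hbp138 : (17 : ZMod 555555555551) ^ (390:ℕ) = 312429916264 := by rw [(pow_mul 17 195 2 : (17 : ZMod 555555555551) ^ (390:ℕ) = _), hbp139]; decide
  have hbp137 : (17 : ZMod 555555555551) ^ (391:ℕ) = 311308576529 := by rw [(pow_succ 17 390 : (17 : ZMod 555555555551) ^ (391:ℕ) = _), hbp138]; decide
  have hbp136 : (17 : ZMod 555555555551) ^ (782:ℕ) = 195825421263 := by rw [(pow_mul 17 391 2 : (17 : ZMod 555555555551) ^ (782:ℕ) = _), hbp137]; decide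
  have hbp135 : (17 : ZMod 555555555551) ^ (783:ℕ) = 551254383716 := by rw [(pow_succ 17 782 : (17 : ZMod 555555555551) ^ (783:ℕ) = _), hbp136]; decide
  have hbp134 : (17 : ZMod 555555555551) ^ (1566:ℕ) = 265460078983 := by rw [(pow_mul 17 783 2 : (17 : ZMod 555555555551) ^ (1566:ℕ) = _), hbp135]; decide
  have hbp133 : (17 : ZMod 555555555551) ^ (3132:ℕ) = 349555664378 := by rw [(pow_mul 17 1566 2 : (17 : ZMod 555555555551) ^ (3132:ℕ) = _), hbp134]; decide
  have hbp132 : (17 : ZMod 555555555551) ^ (6264:ℕ) = 302484814935 := by rw [(pow_mul 17 3132 2 : (17 : ZMod 555555555551) ^ (6264:ℕ) = _), hbp133]; decide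
  have hbp131 : (17 : ZMod 555555555551) ^ (6265:ℕ) = 142241853936 := by rw [(pow_succ 17 6264 : (17 : ZMod 555555555551) ^ (6265:ℕ) = _), hbp132]; decide
  have hbp130 : (17 : ZMod 555555555551) ^ (12530:ℕ) = 205156090076 := by rw [(pow_mul 17 6265 2 : (17 : ZMod 555555555551) ^ (12530:ℕ) = _), hbp131]; decide
  have hbp129 : (17 : ZMod 555555555551) ^ (25060:ℕ) = 61400104844 := by rw [(pow_mul 17 12530 2 : (17 : ZMod 555555555551) ^ (25060:ℕ) = _), hbp130]; decide
  have hbp128 : (17 : ZMod 555555555551) ^ (50120:ℕ) = 440661597462 := by rw [(pow_mul 17 25060 2 : (17 : ZMod 555555555551) ^ (50120:ℕ) = _), hbp129]; decide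
  have hbp127 : (17 : ZMod 555555555551) ^ (100240:ℕ) = 465133629082 := by rw [(pow_mul 17 50120 2 : (17 : ZMod 555555555551) ^ (100240:ℕ) = _), hbp128]; decide
  have hbp126 : (17 : ZMod 555555555551) ^ (100241:ℕ) = 129493916680 := by rw [(pow_succ 17 100240 : (17 : ZMod 555555555551) ^ (100241:ℕ) = _), hbp127]; decide
  have hbp125 : (17 : ZMod 555555555551) ^ (200482:ℕ) = 42063130727 := by rw [(pow_mul 17 100241 2 : (17 : ZMod 555555555551) ^ (200482:ℕ) = _), hbp126]; decide
  have hbp124 : (17 : ZMod 555555555551) ^ (200483:ℕ) = 159517666808 := by rw [(pow_succ 17 200482 : (17 : ZMod 555555555551) ^ (200483:ℕ) = _), hbp125]; decide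
  have hbp123 : (17 : ZMod 555555555551) ^ (400966:ℕ) = 187872285371 := by rw [(pow_mul 17 200483 2 : (17 : ZMod 555555555551) ^ (400966:ℕ) = _), hbp124]; decide
  have hbp122 : (17 : ZMod 555555555551) ^ (400967:ℕ) = 416051073552 := by rw [(pow_succ 17 400966 : (17 : ZMod 555555555551) ^ (400967:ℕ) = _), hbp123]; decide
  have hbp121 : (17 : ZMod 555555555551) ^ (801934:ℕ) = 191121562305 := by rw [(pow_mul 17 400967 2 : (17 : ZMod 555555555551) ^ (801934:ℕ) = _), hbp122]; decide
  have hbp120 : (17 : ZMod 555555555551) ^ (801935:ℕ) = 471288781430 := by rw [(pow_succ 17 801934 : (17 : ZMod 555555555551) ^ (801935:ℕ) = _), hbp121]; decide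
  have hbp119 : (17 : ZMod 555555555551) ^ (1603870:ℕ) = 262307058694 := by rw [(pow_mul 17 801935 2 : (17 : ZMod 555555555551) ^ (1603870:ℕ) = _), hbp120]; decide
  have hbp118 : (17 : ZMod 555555555551) ^ (1603871:ℕ) = 14775553390 := by rw [(pow_succ 17 1603870 : (17 : ZMod 555555555551) ^ (1603871:ℕ) = _), hbp119]; decide
  have hbp117 : (17 : ZMod 555555555551) ^ (3207742:ℕ) = 204752913540 := by rw [(pow_mul 17 1603871 2 : (17 : ZMod 555555555551) ^ (3207742:ℕ) = _), hbp118]; decide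
  have hbp116 : (17 : ZMod 555555555551) ^ (3207743:ℕ) = 147466196874 := by rw [(pow_succ 17 3207742 : (17 : ZMod 555555555551) ^ (3207743:ℕ) = _), hbp117]; decide
  have hbp115 : (17 : ZMod 555555555551) ^ (6415486:ℕ) = 104091305929 := by rw [(pow_mul 17 3207743 2 : (17 : ZMod 555555555551) ^ (6415486:ℕ) = _), hbp116]; decide
  have hbp114 : (17 : ZMod 555555555551) ^ (6415487:ℕ) = 102885534140 := by rw [(pow_succ 17 6415486 : (17 : ZMod 555555555551) ^ (6415487:ℕ) = _), hbp115]; decide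
  have hbp113 : (17 : ZMod 555555555551) ^ (12830974:ℕ) = 359906091307 := by rw [(pow_mul 17 6415487 2 : (17 : ZMod 555555555551) ^ (12830974:ℕ) = _), hbp114]; decide
  have hbp112 : (17 : ZMod 555555555551) ^ (12830975:ℕ) = 7292441158 := by rw [(pow_succ 17 12830974 : (17 : ZMod 555555555551) ^ (12830975:ℕ) = _), hbp113]; decide
  have hbp111 : (17 : ZMod 555555555551) ^ (25661950:ℕ) = 265550676708 := by rw [(pow_mul 17 12830975 2 : (17 : ZMod 555555555551) ^ (25661950:ℕ) = _), hbp112]; decide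
  have hbp163 : (17 : ZMod 555555555551) ^ (33:ℕ) = 357045057366 := by rw [(pow_succ 17 32 : (17 : ZMod 555555555551) ^ (33:ℕ) = _), hbp51]; decide
  have hbp162 : (17 : ZMod 555555555551) ^ (66:ℕ) = 535576476474 := by rw [(pow_mul 17 33 2 : (17 : ZMod 555555555551) ^ (66:ℕ) = _), hbp163]; decide
  have hbp161 : (17 : ZMod 555555555551) ^ (132:ℕ) = 212736757898 := by rw [(pow_mul 17 66 2 : (17 : ZMod 555555555551) ^ (132:ℕ) = _), hbp162]; decide
  have hbp160 : (17 : ZMod 555555555551) ^ (264:ℕ) = 212261078214 := by rw [(pow_mul 17 132 2 : (17 : ZMod 555555555551) ^ (264:ℕ) = _), hbp161]; decide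
  have hbp159 : (17 : ZMod 555555555551) ^ (528:ℕ) = 494830061012 := by rw [(pow_mul 17 264 2 : (17 : ZMod 555555555551) ^ (528:ℕ) = _), hbp160]; decide
  have hbp158 : (17 : ZMod 555555555551) ^ (1056:ℕ) = 369690358485 := by rw [(pow_mul 17 528 2 : (17 : ZMod 555555555551) ^ (1056:ℕ) = _), hbp159]; decide
  have hbp157 : (17 : ZMod 555555555551) ^ (1057:ℕ) = 173624983184 := by rw [(pow_succ 17 1056 : (17 : ZMod 555555555551) ^ (1057:ℕ) = _), hbp158]; decide
  have hbp156 : (17 : ZMod 555555555551) ^ (2114:ℕ) = 335921427542 := by rw [(pow_mul 17 1057 2 : (17 : ZMod 555555555551) ^ (2114:ℕ) = _), hbp157]; decide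
  have hbp155 : (17 : ZMod 555555555551) ^ (4228:ℕ) = 2692668945 := by rw [(pow_mul 17 2114 2 : (17 : ZMod 555555555551) ^ (4228:ℕ) = _), hbp156]; decide
  have hbp154 : (17 : ZMod 555555555551) ^ (8456:ℕ) = 491871311287 := by rw [(pow_mul 17 4228 2 : (17 : ZMod 555555555551) ^ (8456:ℕ) = _), hbp155]; decide
  have hbp153 : (17 : ZMod 555555555551) ^ (16912:ℕ) = 287851279805 := by rw [(pow_mul 17 8456 2 : (17 : ZMod 555555555551) ^ (16912:ℕ) = _), hbp154]; decide
  have hbp152 : (17 : ZMod 555555555551) ^ (16913:ℕ) = 449027312277 := by rw [(pow_succ 17 16912 : (17 : ZMod 555555555551) ^ (16913:ℕ) = _), hbp153]; decide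
  have hbp151 : (17 : ZMod 555555555551) ^ (33826:ℕ) = 137582025319 := by rw [(pow_mul 17 16913 2 : (17 : ZMod 555555555551) ^ (33826:ℕ) = _), hbp152]; decide
  have hbp150 : (17 : ZMod 555555555551) ^ (67652:ℕ) = 477617768468 := by rw [(pow_mul 17 33826 2 : (17 : ZMod 555555555551) ^ (67652:ℕ) = _), hbp151]; decide
  have hbp149 : (17 : ZMod 555555555551) ^ (67653:ℕ) = 341724286242 := by rw [(pow_succ 17 67652 : (17 : ZMod 555555555551) ^ (67653:ℕ) = _), hbp150]; decide
  have hbp148 : (17 : ZMod 555555555551) ^ (135306:ℕ) = 228576149259 := by rw [(pow_mul 17 67653 2 : (17 : ZMod 555555555551) ^ (135306:ℕ) = _), hbp149]; decide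
  have hbp147 : (17 : ZMod 555555555551) ^ (270612:ℕ) = 501072108363 := by rw [(pow_mul 17 135306 2 : (17 : ZMod 555555555551) ^ (270612:ℕ) = _), hbp148]; decide
  have hbp146 : (17 : ZMod 555555555551) ^ (541224:ℕ) = 289704142463 := by rw [(pow_mul 17 270612 2 : (17 : ZMod 555555555551) ^ (541224:ℕ) = _), hbp147]; decide
  have hbp145 : (17 : ZMod 555555555551) ^ (541225:ℕ) = 480525977463 := by rw [(pow_succ 17 541224 : (17 : ZMod 555555555551) ^ (541225:ℕ) = _), hbp146]; decide
  have hbp144 : (17 : ZMod 555555555551) ^ (1082450:ℕ) = 331673346186 := by rw [(pow_mul 17 541225 2 : (17 : ZMod 555555555551) ^ (1082450:ℕ) = _), hbp145]; decide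
  refine lucas_primality _ 17 ?_ ?_
  · show (17 : ZMod 555555555551) ^ (555555555551-1 : ℕ) = 1
    rw [(by norm_num : (555555555551-1:ℕ) = 555555555550)]; exact hbp1
  · intro q hq hdvd
    rw [(by norm_num : (555555555551-1:ℕ) = 555555555550)] at hdvd
    have hdvd' : q ∣ 2*(5*(5*(21649*513239))) := by rw [(by norm_num : 2*(5*(5*(21649*513239))) = 555555555550)]; exact hdvd
    have hq2 : (2:ℕ).Prime := by norm_num
    have hq5 : (5:ℕ).Prime := by norm_num
    have hqa : (21649:ℕ).Prime := by norm_num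
    have hqb : (513239:ℕ).Prime := by norm_num
    have hcs : q = 2 ∨ q = 5 ∨ q = 21649 ∨ q = 513239 := by
      rcases (Nat.Prime.dvd_mul hq).mp hdvd' with h | h
      · exact Or.inl ((Nat.prime_dvd_prime_iff_eq hq hq2).mp h)
      rcases (Nat.Prime.dvd_mul hq).mp h with h | h
      · exact Or.inr (Or.inl ((Nat.prime_dvd_prime_iff_eq hq hq5).mp h))
      rcases (Nat.Prime.dvd_mul hq).mp h with h | h
      · exact Or.inr (Or.inl ((Nat.prime_dvd_prime_iff_eq hq hq5).mp h))
      rcases (Nat.Prime.dvd_mul hq).mp h with h | h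
      · exact Or.inr (Or.inr (Or.inl ((Nat.prime_dvd_prime_iff_eq hq hqa).mp h)))
      · exact Or.inr (Or.inr (Or.inr ((Nat.prime_dvd_prime_iff_eq hq hqb).mp h)))
    rcases hcs with rfl | rfl | rfl | rfl
    · rw [(by norm_num : ((555555555551:ℕ)-1)/2 = 277777777775), hbp2]; decide
    · rw [(by norm_num : ((555555555551:ℕ)-1)/5 = 111111111110), hbp57]; decide
    · rw [(by norm_num : ((555555555551:ℕ)-1)/21649 = 25661950), hbp111]; decide
    · rw [(by norm_num : ((555555555551:ℕ)-1)/513239 = 1082450), hbp144]; decide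


theorem totient_mod4 (x : ℕ) (h : Nat.totient x % 4 = 2) :
    ∃ p k, Nat.Prime p ∧ p % 4 = 3 ∧ Nat.totient x = p ^ k * (p - 1) := by
  have hx0 : x ≠ 0 := by rintro rfl; simp at h
  by_cases hp : ∃ p, Nat.Prime p ∧ p ≠ 2 ∧ p ∣ x
  · obtain ⟨p, pp, hp2, hpx⟩ := hp
    have hpodd : p % 2 = 1 := Nat.Prime.eq_two_or_odd pp |>.resolve_left hp2
    have hp1 : 2 ≤ p := pp.two_le
    set v := x.factorization p with hv
    have hv1 : 1 ≤ v := pp.factorization_pos_of_dvd hx0 hpx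
    have hsplit : p ^ v * (x / p ^ v) = x := Nat.ordProj_mul_ordCompl_eq_self x p
    have hcop : Nat.Coprime (p ^ v) (x / p ^ v) :=
      Nat.Coprime.pow_left _ (Nat.coprime_ordCompl pp hx0)
    set m := x / p ^ v with hm
    clear_value v
    clear_value m
    have hm0 : m ≠ 0 := by
      intro h0
      rw [h0, mul_zero] at hsplit
      exact hx0 hsplit.symm
    have htot : Nat.totient x = p ^ (v-1) * (p-1) * Nat.totient m := by
      conv_lhs => rw [← hsplit]
      rw [Nat.totient_mul hcop, Nat.totient_prime_pow pp hv1]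
    have hdvd2 : 2 ∣ (p - 1) := by omega
    have hmodd : Nat.totient m % 2 = 1 := by
      by_contra he
      have h2 : 2 ∣ Nat.totient m := by omega
      have h4 : 4 ∣ Nat.totient x := by
        rw [htot]
        obtain ⟨a, ha⟩ := hdvd2
        obtain ⟨b, hb⟩ := h2
        exact ⟨p ^ (v-1) * a * b, by rw [ha, hb]; ring⟩
      omega
    have hmtot : Nat.totient m = 1 := by
      rcases Nat.lt_or_ge m 3 with h3 | h3
      · have hm12 : m = 1 ∨ m = 2 := by omega
        rcases hm12 with h1 | h1 <;> rw [h1] <;> decide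
      · have := Nat.totient_even h3
        rw [Nat.even_iff] at this
        omega
    rw [hmtot, mul_one] at htot
    have hp4 : p % 4 = 3 := by
      rcases Nat.lt_or_ge (p % 4) 4 with h4 | h4
      · have : p % 4 = 1 ∨ p % 4 = 3 := by omega
        rcases this with h1 | h1
        · exfalso
          have hd : 4 ∣ p - 1 := by omega
          have : 4 ∣ Nat.totient x := by
            rw [htot]
            obtain ⟨a, ha⟩ := hd
            exact ⟨p ^ (v-1) * a, by rw [ha]; ring⟩
          omega
        · exact h1
      · omega
    exact ⟨p, v - 1, pp, hp4, htot⟩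
  · push_neg at hp
    have hx1 : x ≠ 1 := by rintro rfl; simp [Nat.totient_one] at h
    have h2 : ∀ {d : ℕ}, Nat.Prime d → d ∣ x → d = 2 := by
      intro d hd hdx
      by_contra hne
      exact (hp d hd hne) hdx
    have hpow := Nat.eq_prime_pow_of_unique_prime_dvd hx0 h2
    set k := x.primeFactorsList.length with hk
    have hk1 : 1 ≤ k := by
      rcases Nat.eq_zero_or_pos k with h0 | h1
      · rw [h0, pow_zero] at hpow; exact absurd hpow hx1
      · exact h1
    rw [hpow, Nat.totient_prime_pow Nat.prime_two hk1] at h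
    rw [show (2:ℕ)-1 = 1 from rfl, mul_one] at h
    have hfin : 2 ^ (k-1) = 2 := by
      rcases Nat.lt_or_ge (k-1) 2 with hlt | hge
      · have h01 : k - 1 = 0 ∨ k - 1 = 1 := by omega
        rcases h01 with h0 | h0 <;> rw [h0] at h ⊢
        · norm_num at h
        · norm_num
      · exfalso
        have : (4:ℕ) ∣ 2 ^ (k-1) := by
          calc (4:ℕ) = 2^2 := by norm_num
          _ ∣ 2^(k-1) := pow_dvd_pow 2 hge
        omega
    refine ⟨3, 0, by norm_num, by norm_num, ?_⟩
    rw [hpow, Nat.totient_prime_pow Nat.prime_two hk1, show (2:ℕ)-1 = 1 from rfl, mul_one, hfin]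
    decide

theorem pow_ne_aux {q m : ℕ} (hq : 2 ≤ q) (h1 : m ≠ 1) (h2 : ¬ q ∣ m) :
    ∀ j k : ℕ, q ^ k ≠ q ^ j * m := by
  intro j
  induction j with
  | zero =>
    intro k hk
    rw [pow_zero, one_mul] at hk
    cases k with
    | zero => exact h1 hk.symm
    | succ n => exact h2 ⟨q ^ n, by rw [← hk, pow_succ, mul_comm]⟩
  | succ j ih =>
    intro k hk
    cases k with
    | zero =>
      rw [pow_zero] at hk
      have hq1 : q ∣ 1 := ⟨q ^ j * m, by rw [hk, pow_succ]; ring⟩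
      have := Nat.le_of_dvd one_pos hq1
      omega
    | succ n =>
      apply ih n
      have hq0 : 0 < q := by omega
      apply Nat.eq_of_mul_eq_mul_left hq0
      calc q * q ^ n = q ^ (n+1) := (pow_succ' q n).symm
      _ = q ^ (j+1) * m := hk
      _ = q * (q ^ j * m) := by rw [pow_succ]; ring

theorem no_form1 {N q : ℕ} (hq : 2 ≤ q) (e m : ℕ) (hNe : N = (q-1) * (q^e * m))
    (hm : ¬ q ∣ m) (h1 : m ≠ 1) : ∀ k, N ≠ q^k * (q-1) := by
  intro k hk
  have hq1 : 0 < q - 1 := by omega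
  have : q ^ k = q ^ e * m := by
    apply Nat.eq_of_mul_eq_mul_left hq1
    calc (q-1) * q^k = q^k * (q-1) := by ring
    _ = N := hk.symm
    _ = (q-1) * (q^e * m) := hNe
  exact pow_ne_aux hq h1 hm e k this

theorem no_form2 {N q : ℕ} (h : ¬ (q-1) ∣ N) : ∀ k, N ≠ q^k * (q-1) :=
  fun k hk => h ⟨q^k, by rw [hk, mul_comm]⟩

theorem not_totient_50 (x : ℕ) (hx : Nat.totient x = 50) : False := by
  obtain ⟨p, k, pp, h3, heq⟩ := totient_mod4 x (by rw [hx])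
  rw [hx] at heq
  cases k with
  | zero =>
    rw [pow_zero, one_mul] at heq
    have hp : p = 51 := by have := pp.two_le; omega
    rw [hp] at pp
    norm_num at pp
  | succ j =>
    have hpd : p ∣ 50 := ⟨p ^ j * (p - 1), by rw [heq, pow_succ]; ring⟩
    have hpd' : p ∣ 2*(5*(5)) := by norm_num at hpd ⊢; exact hpd
    have hq2 : (2:ℕ).Prime := by norm_num
    have hq5 : (5:ℕ).Prime := by norm_num
    have hcases : p = 2 ∨ p = 5 := by
      rcases (Nat.Prime.dvd_mul pp).mp hpd' with h | h
      · exact Or.inl ((Nat.prime_dvd_prime_iff_eq pp hq2).mp h)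
      rcases (Nat.Prime.dvd_mul pp).mp h with h | h
      · exact Or.inr (((Nat.prime_dvd_prime_iff_eq pp hq5).mp h))
      · exact Or.inr (((Nat.prime_dvd_prime_iff_eq pp hq5).mp h))
    rcases hcases with rfl | rfl
    · norm_num at h3
    · norm_num at h3

theorem not_totient_90 (x : ℕ) (hx : Nat.totient x = 90) : False := by
  obtain ⟨p, k, pp, h3, heq⟩ := totient_mod4 x (by rw [hx])
  rw [hx] at heq
  cases k with
  | zero =>
    rw [pow_zero, one_mul] at heq
    have hp : p = 91 := by have := pp.two_le; omega
    rw [hp] at pp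
    norm_num at pp
  | succ j =>
    have hpd : p ∣ 90 := ⟨p ^ j * (p - 1), by rw [heq, pow_succ]; ring⟩
    have hpd' : p ∣ 2*(3*(3*(5))) := by norm_num at hpd ⊢; exact hpd
    have hq2 : (2:ℕ).Prime := by norm_num
    have hq3 : (3:ℕ).Prime := by norm_num
    have hq5 : (5:ℕ).Prime := by norm_num
    have hcases : p = 2 ∨ p = 3 ∨ p = 5 := by
      rcases (Nat.Prime.dvd_mul pp).mp hpd' with h | h
      · exact Or.inl ((Nat.prime_dvd_prime_iff_eq pp hq2).mp h)
      rcases (Nat.Prime.dvd_mul pp).mp h with h | h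
      · exact Or.inr (Or.inl ((Nat.prime_dvd_prime_iff_eq pp hq3).mp h))
      rcases (Nat.Prime.dvd_mul pp).mp h with h | h
      · exact Or.inr (Or.inl ((Nat.prime_dvd_prime_iff_eq pp hq3).mp h))
      · exact Or.inr (Or.inr (((Nat.prime_dvd_prime_iff_eq pp hq5).mp h)))
    rcases hcases with rfl | rfl | rfl
    · norm_num at h3
    · exact no_form1 (by norm_num) 2 5 (by norm_num) (by norm_num) (by norm_num) (j+1) heq
    · norm_num at h3

theorem not_totient_550 (x : ℕ) (hx : Nat.totient x = 550) : False := by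
  obtain ⟨p, k, pp, h3, heq⟩ := totient_mod4 x (by rw [hx])
  rw [hx] at heq
  cases k with
  | zero =>
    rw [pow_zero, one_mul] at heq
    have hp : p = 551 := by have := pp.two_le; omega
    rw [hp] at pp
    norm_num at pp
  | succ j =>
    have hpd : p ∣ 550 := ⟨p ^ j * (p - 1), by rw [heq, pow_succ]; ring⟩
    have hpd' : p ∣ 2*(5*(5*(11))) := by norm_num at hpd ⊢; exact hpd
    have hq2 : (2:ℕ).Prime := by norm_num
    have hq5 : (5:ℕ).Prime := by norm_num
    have hq11 : (11:ℕ).Prime := by norm_num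
    have hcases : p = 2 ∨ p = 5 ∨ p = 11 := by
      rcases (Nat.Prime.dvd_mul pp).mp hpd' with h | h
      · exact Or.inl ((Nat.prime_dvd_prime_iff_eq pp hq2).mp h)
      rcases (Nat.Prime.dvd_mul pp).mp h with h | h
      · exact Or.inr (Or.inl ((Nat.prime_dvd_prime_iff_eq pp hq5).mp h))
      rcases (Nat.Prime.dvd_mul pp).mp h with h | h
      · exact Or.inr (Or.inl ((Nat.prime_dvd_prime_iff_eq pp hq5).mp h))
      · exact Or.inr (Or.inr (((Nat.prime_dvd_prime_iff_eq pp hq11).mp h)))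
    rcases hcases with rfl | rfl | rfl
    · norm_num at h3
    · norm_num at h3
    · exact no_form1 (by norm_num) 1 5 (by norm_num) (by norm_num) (by norm_num) (j+1) heq

theorem not_totient_590 (x : ℕ) (hx : Nat.totient x = 590) : False := by
  obtain ⟨p, k, pp, h3, heq⟩ := totient_mod4 x (by rw [hx])
  rw [hx] at heq
  cases k with
  | zero =>
    rw [pow_zero, one_mul] at heq
    have hp : p = 591 := by have := pp.two_le; omega
    rw [hp] at pp
    norm_num at pp
  | succ j =>
    have hpd : p ∣ 590 := ⟨p ^ j * (p - 1), by rw [heq, pow_succ]; ring⟩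
    have hpd' : p ∣ 2*(5*(59)) := by norm_num at hpd ⊢; exact hpd
    have hq2 : (2:ℕ).Prime := by norm_num
    have hq5 : (5:ℕ).Prime := by norm_num
    have hq59 : (59:ℕ).Prime := by norm_num
    have hcases : p = 2 ∨ p = 5 ∨ p = 59 := by
      rcases (Nat.Prime.dvd_mul pp).mp hpd' with h | h
      · exact Or.inl ((Nat.prime_dvd_prime_iff_eq pp hq2).mp h)
      rcases (Nat.Prime.dvd_mul pp).mp h with h | h
      · exact Or.inr (Or.inl ((Nat.prime_dvd_prime_iff_eq pp hq5).mp h))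
      · exact Or.inr (Or.inr (((Nat.prime_dvd_prime_iff_eq pp hq59).mp h)))
    rcases hcases with rfl | rfl | rfl
    · norm_num at h3
    · norm_num at h3
    · exact no_form2 (by norm_num) (j+1) heq

theorem not_totient_950 (x : ℕ) (hx : Nat.totient x = 950) : False := by
  obtain ⟨p, k, pp, h3, heq⟩ := totient_mod4 x (by rw [hx])
  rw [hx] at heq
  cases k with
  | zero =>
    rw [pow_zero, one_mul] at heq
    have hp : p = 951 := by have := pp.two_le; omega
    rw [hp] at pp
    norm_num at pp
  | succ j =>
    have hpd : p ∣ 950 := ⟨p ^ j * (p - 1), by rw [heq, pow_succ]; ring⟩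
    have hpd' : p ∣ 2*(5*(5*(19))) := by norm_num at hpd ⊢; exact hpd
    have hq2 : (2:ℕ).Prime := by norm_num
    have hq5 : (5:ℕ).Prime := by norm_num
    have hq19 : (19:ℕ).Prime := by norm_num
    have hcases : p = 2 ∨ p = 5 ∨ p = 19 := by
      rcases (Nat.Prime.dvd_mul pp).mp hpd' with h | h
      · exact Or.inl ((Nat.prime_dvd_prime_iff_eq pp hq2).mp h)
      rcases (Nat.Prime.dvd_mul pp).mp h with h | h
      · exact Or.inr (Or.inl ((Nat.prime_dvd_prime_iff_eq pp hq5).mp h))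
      rcases (Nat.Prime.dvd_mul pp).mp h with h | h
      · exact Or.inr (Or.inl ((Nat.prime_dvd_prime_iff_eq pp hq5).mp h))
      · exact Or.inr (Or.inr (((Nat.prime_dvd_prime_iff_eq pp hq19).mp h)))
    rcases hcases with rfl | rfl | rfl
    · norm_num at h3
    · norm_num at h3
    · exact no_form2 (by norm_num) (j+1) heq

theorem not_totient_5550 (x : ℕ) (hx : Nat.totient x = 5550) : False := by
  obtain ⟨p, k, pp, h3, heq⟩ := totient_mod4 x (by rw [hx])
  rw [hx] at heq
  cases k with
  | zero =>
    rw [pow_zero, one_mul] at heq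
    have hp : p = 5551 := by have := pp.two_le; omega
    rw [hp] at pp
    norm_num at pp
  | succ j =>
    have hpd : p ∣ 5550 := ⟨p ^ j * (p - 1), by rw [heq, pow_succ]; ring⟩
    have hpd' : p ∣ 2*(3*(5*(5*(37)))) := by norm_num at hpd ⊢; exact hpd
    have hq2 : (2:ℕ).Prime := by norm_num
    have hq3 : (3:ℕ).Prime := by norm_num
    have hq5 : (5:ℕ).Prime := by norm_num
    have hq37 : (37:ℕ).Prime := by norm_num
    have hcases : p = 2 ∨ p = 3 ∨ p = 5 ∨ p = 37 := by
      rcases (Nat.Prime.dvd_mul pp).mp hpd' with h | h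
      · exact Or.inl ((Nat.prime_dvd_prime_iff_eq pp hq2).mp h)
      rcases (Nat.Prime.dvd_mul pp).mp h with h | h
      · exact Or.inr (Or.inl ((Nat.prime_dvd_prime_iff_eq pp hq3).mp h))
      rcases (Nat.Prime.dvd_mul pp).mp h with h | h
      · exact Or.inr (Or.inr (Or.inl ((Nat.prime_dvd_prime_iff_eq pp hq5).mp h)))
      rcases (Nat.Prime.dvd_mul pp).mp h with h | h
      · exact Or.inr (Or.inr (Or.inl ((Nat.prime_dvd_prime_iff_eq pp hq5).mp h)))
      · exact Or.inr (Or.inr (Or.inr (((Nat.prime_dvd_prime_iff_eq pp hq37).mp h))))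
    rcases hcases with rfl | rfl | rfl | rfl
    · norm_num at h3
    · exact no_form1 (by norm_num) 1 925 (by norm_num) (by norm_num) (by norm_num) (j+1) heq
    · norm_num at h3
    · norm_num at h3

theorem not_totient_5950 (x : ℕ) (hx : Nat.totient x = 5950) : False := by
  obtain ⟨p, k, pp, h3, heq⟩ := totient_mod4 x (by rw [hx])
  rw [hx] at heq
  cases k with
  | zero =>
    rw [pow_zero, one_mul] at heq
    have hp : p = 5951 := by have := pp.two_le; omega
    rw [hp] at pp
    norm_num at pp
  | succ j =>
    have hpd : p ∣ 5950 := ⟨p ^ j * (p - 1), by rw [heq, pow_succ]; ring⟩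
    have hpd' : p ∣ 2*(5*(5*(7*(17)))) := by norm_num at hpd ⊢; exact hpd
    have hq2 : (2:ℕ).Prime := by norm_num
    have hq5 : (5:ℕ).Prime := by norm_num
    have hq7 : (7:ℕ).Prime := by norm_num
    have hq17 : (17:ℕ).Prime := by norm_num
    have hcases : p = 2 ∨ p = 5 ∨ p = 7 ∨ p = 17 := by
      rcases (Nat.Prime.dvd_mul pp).mp hpd' with h | h
      · exact Or.inl ((Nat.prime_dvd_prime_iff_eq pp hq2).mp h)
      rcases (Nat.Prime.dvd_mul pp).mp h with h | h
      · exact Or.inr (Or.inl ((Nat.prime_dvd_prime_iff_eq pp hq5).mp h))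
      rcases (Nat.Prime.dvd_mul pp).mp h with h | h
      · exact Or.inr (Or.inl ((Nat.prime_dvd_prime_iff_eq pp hq5).mp h))
      rcases (Nat.Prime.dvd_mul pp).mp h with h | h
      · exact Or.inr (Or.inr (Or.inl ((Nat.prime_dvd_prime_iff_eq pp hq7).mp h)))
      · exact Or.inr (Or.inr (Or.inr (((Nat.prime_dvd_prime_iff_eq pp hq17).mp h))))
    rcases hcases with rfl | rfl | rfl | rfl
    · norm_num at h3
    · norm_num at h3
    · exact no_form2 (by norm_num) (j+1) heq
    · norm_num at h3

theorem not_totient_55550 (x : ℕ) (hx : Nat.totient x = 55550) : False := by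
  obtain ⟨p, k, pp, h3, heq⟩ := totient_mod4 x (by rw [hx])
  rw [hx] at heq
  cases k with
  | zero =>
    rw [pow_zero, one_mul] at heq
    have hp : p = 55551 := by have := pp.two_le; omega
    rw [hp] at pp
    norm_num at pp
  | succ j =>
    have hpd : p ∣ 55550 := ⟨p ^ j * (p - 1), by rw [heq, pow_succ]; ring⟩
    have hpd' : p ∣ 2*(5*(5*(11*(101)))) := by norm_num at hpd ⊢; exact hpd
    have hq2 : (2:ℕ).Prime := by norm_num
    have hq5 : (5:ℕ).Prime := by norm_num
    have hq11 : (11:ℕ).Prime := by norm_num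
    have hq101 : (101:ℕ).Prime := by norm_num
    have hcases : p = 2 ∨ p = 5 ∨ p = 11 ∨ p = 101 := by
      rcases (Nat.Prime.dvd_mul pp).mp hpd' with h | h
      · exact Or.inl ((Nat.prime_dvd_prime_iff_eq pp hq2).mp h)
      rcases (Nat.Prime.dvd_mul pp).mp h with h | h
      · exact Or.inr (Or.inl ((Nat.prime_dvd_prime_iff_eq pp hq5).mp h))
      rcases (Nat.Prime.dvd_mul pp).mp h with h | h
      · exact Or.inr (Or.inl ((Nat.prime_dvd_prime_iff_eq pp hq5).mp h))
      rcases (Nat.Prime.dvd_mul pp).mp h with h | h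
      · exact Or.inr (Or.inr (Or.inl ((Nat.prime_dvd_prime_iff_eq pp hq11).mp h)))
      · exact Or.inr (Or.inr (Or.inr (((Nat.prime_dvd_prime_iff_eq pp hq101).mp h))))
    rcases hcases with rfl | rfl | rfl | rfl
    · norm_num at h3
    · norm_num at h3
    · exact no_form1 (by norm_num) 1 505 (by norm_num) (by norm_num) (by norm_num) (j+1) heq
    · norm_num at h3

theorem not_totient_555550 (x : ℕ) (hx : Nat.totient x = 555550) : False := by
  obtain ⟨p, k, pp, h3, heq⟩ := totient_mod4 x (by rw [hx])
  rw [hx] at heq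
  cases k with
  | zero =>
    rw [pow_zero, one_mul] at heq
    have hp : p = 555551 := by have := pp.two_le; omega
    rw [hp] at pp
    norm_num at pp
  | succ j =>
    have hpd : p ∣ 555550 := ⟨p ^ j * (p - 1), by rw [heq, pow_succ]; ring⟩
    have hpd' : p ∣ 2*(5*(5*(41*(271)))) := by norm_num at hpd ⊢; exact hpd
    have hq2 : (2:ℕ).Prime := by norm_num
    have hq5 : (5:ℕ).Prime := by norm_num
    have hq41 : (41:ℕ).Prime := by norm_num
    have hq271 : (271:ℕ).Prime := by norm_num
    have hcases : p = 2 ∨ p = 5 ∨ p = 41 ∨ p = 271 := by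
      rcases (Nat.Prime.dvd_mul pp).mp hpd' with h | h
      · exact Or.inl ((Nat.prime_dvd_prime_iff_eq pp hq2).mp h)
      rcases (Nat.Prime.dvd_mul pp).mp h with h | h
      · exact Or.inr (Or.inl ((Nat.prime_dvd_prime_iff_eq pp hq5).mp h))
      rcases (Nat.Prime.dvd_mul pp).mp h with h | h
      · exact Or.inr (Or.inl ((Nat.prime_dvd_prime_iff_eq pp hq5).mp h))
      rcases (Nat.Prime.dvd_mul pp).mp h with h | h
      · exact Or.inr (Or.inr (Or.inl ((Nat.prime_dvd_prime_iff_eq pp hq41).mp h)))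
      · exact Or.inr (Or.inr (Or.inr (((Nat.prime_dvd_prime_iff_eq pp hq271).mp h))))
    rcases hcases with rfl | rfl | rfl | rfl
    · norm_num at h3
    · norm_num at h3
    · norm_num at h3
    · exact no_form2 (by norm_num) (j+1) heq

theorem not_totient_5555550 (x : ℕ) (hx : Nat.totient x = 5555550) : False := by
  obtain ⟨p, k, pp, h3, heq⟩ := totient_mod4 x (by rw [hx])
  rw [hx] at heq
  cases k with
  | zero =>
    rw [pow_zero, one_mul] at heq
    have hp : p = 5555551 := by have := pp.two_le; omega
    rw [hp] at pp
    norm_num at pp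
  | succ j =>
    have hpd : p ∣ 5555550 := ⟨p ^ j * (p - 1), by rw [heq, pow_succ]; ring⟩
    have hpd' : p ∣ 2*(3*(5*(5*(7*(11*(13*(37))))))) := by norm_num at hpd ⊢; exact hpd
    have hq2 : (2:ℕ).Prime := by norm_num
    have hq3 : (3:ℕ).Prime := by norm_num
    have hq5 : (5:ℕ).Prime := by norm_num
    have hq7 : (7:ℕ).Prime := by norm_num
    have hq11 : (11:ℕ).Prime := by norm_num
    have hq13 : (13:ℕ).Prime := by norm_num
    have hq37 : (37:ℕ).Prime := by norm_num
    have hcases : p = 2 ∨ p = 3 ∨ p = 5 ∨ p = 7 ∨ p = 11 ∨ p = 13 ∨ p = 37 := by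
      rcases (Nat.Prime.dvd_mul pp).mp hpd' with h | h
      · exact Or.inl ((Nat.prime_dvd_prime_iff_eq pp hq2).mp h)
      rcases (Nat.Prime.dvd_mul pp).mp h with h | h
      · exact Or.inr (Or.inl ((Nat.prime_dvd_prime_iff_eq pp hq3).mp h))
      rcases (Nat.Prime.dvd_mul pp).mp h with h | h
      · exact Or.inr (Or.inr (Or.inl ((Nat.prime_dvd_prime_iff_eq pp hq5).mp h)))
      rcases (Nat.Prime.dvd_mul pp).mp h with h | h
      · exact Or.inr (Or.inr (Or.inl ((Nat.prime_dvd_prime_iff_eq pp hq5).mp h)))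
      rcases (Nat.Prime.dvd_mul pp).mp h with h | h
      · exact Or.inr (Or.inr (Or.inr (Or.inl ((Nat.prime_dvd_prime_iff_eq pp hq7).mp h))))
      rcases (Nat.Prime.dvd_mul pp).mp h with h | h
      · exact Or.inr (Or.inr (Or.inr (Or.inr (Or.inl ((Nat.prime_dvd_prime_iff_eq pp hq11).mp h)))))
      rcases (Nat.Prime.dvd_mul pp).mp h with h | h
      · exact Or.inr (Or.inr (Or.inr (Or.inr (Or.inr (Or.inl ((Nat.prime_dvd_prime_iff_eq pp hq13).mp h))))))
      · exact Or.inr (Or.inr (Or.inr (Or.inr (Or.inr (Or.inr (((Nat.prime_dvd_prime_iff_eq pp hq37).mp h)))))))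
    rcases hcases with rfl | rfl | rfl | rfl | rfl | rfl | rfl
    · norm_num at h3
    · exact no_form1 (by norm_num) 1 925925 (by norm_num) (by norm_num) (by norm_num) (j+1) heq
    · norm_num at h3
    · exact no_form1 (by norm_num) 1 132275 (by norm_num) (by norm_num) (by norm_num) (j+1) heq
    · exact no_form1 (by norm_num) 1 50505 (by norm_num) (by norm_num) (by norm_num) (j+1) heq
    · norm_num at h3
    · norm_num at h3

theorem not_totient_55555550 (x : ℕ) (hx : Nat.totient x = 55555550) : False := by
  obtain ⟨p, k, pp, h3, heq⟩ := totient_mod4 x (by rw [hx])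
  rw [hx] at heq
  cases k with
  | zero =>
    rw [pow_zero, one_mul] at heq
    have hp : p = 55555551 := by have := pp.two_le; omega
    rw [hp] at pp
    norm_num at pp
  | succ j =>
    have hpd : p ∣ 55555550 := ⟨p ^ j * (p - 1), by rw [heq, pow_succ]; ring⟩
    have hpd' : p ∣ 2*(5*(5*(239*(4649)))) := by norm_num at hpd ⊢; exact hpd
    have hq2 : (2:ℕ).Prime := by norm_num
    have hq5 : (5:ℕ).Prime := by norm_num
    have hq239 : (239:ℕ).Prime := by norm_num
    have hq4649 : (4649:ℕ).Prime := by norm_num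
    have hcases : p = 2 ∨ p = 5 ∨ p = 239 ∨ p = 4649 := by
      rcases (Nat.Prime.dvd_mul pp).mp hpd' with h | h
      · exact Or.inl ((Nat.prime_dvd_prime_iff_eq pp hq2).mp h)
      rcases (Nat.Prime.dvd_mul pp).mp h with h | h
      · exact Or.inr (Or.inl ((Nat.prime_dvd_prime_iff_eq pp hq5).mp h))
      rcases (Nat.Prime.dvd_mul pp).mp h with h | h
      · exact Or.inr (Or.inl ((Nat.prime_dvd_prime_iff_eq pp hq5).mp h))
      rcases (Nat.Prime.dvd_mul pp).mp h with h | h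
      · exact Or.inr (Or.inr (Or.inl ((Nat.prime_dvd_prime_iff_eq pp hq239).mp h)))
      · exact Or.inr (Or.inr (Or.inr (((Nat.prime_dvd_prime_iff_eq pp hq4649).mp h))))
    rcases hcases with rfl | rfl | rfl | rfl
    · norm_num at h3
    · norm_num at h3
    · exact no_form2 (by norm_num) (j+1) heq
    · norm_num at h3

theorem not_totient_555555550 (x : ℕ) (hx : Nat.totient x = 555555550) : False := by
  obtain ⟨p, k, pp, h3, heq⟩ := totient_mod4 x (by rw [hx])
  rw [hx] at heq
  cases k with
  | zero =>
    rw [pow_zero, one_mul] at heq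
    have hp : p = 555555551 := by have := pp.two_le; omega
    rw [hp] at pp
    norm_num at pp
  | succ j =>
    have hpd : p ∣ 555555550 := ⟨p ^ j * (p - 1), by rw [heq, pow_succ]; ring⟩
    have hpd' : p ∣ 2*(5*(5*(11*(73*(101*(137)))))) := by norm_num at hpd ⊢; exact hpd
    have hq2 : (2:ℕ).Prime := by norm_num
    have hq5 : (5:ℕ).Prime := by norm_num
    have hq11 : (11:ℕ).Prime := by norm_num
    have hq73 : (73:ℕ).Prime := by norm_num
    have hq101 : (101:ℕ).Prime := by norm_num
    have hq137 : (137:ℕ).Prime := by norm_num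
    have hcases : p = 2 ∨ p = 5 ∨ p = 11 ∨ p = 73 ∨ p = 101 ∨ p = 137 := by
      rcases (Nat.Prime.dvd_mul pp).mp hpd' with h | h
      · exact Or.inl ((Nat.prime_dvd_prime_iff_eq pp hq2).mp h)
      rcases (Nat.Prime.dvd_mul pp).mp h with h | h
      · exact Or.inr (Or.inl ((Nat.prime_dvd_prime_iff_eq pp hq5).mp h))
      rcases (Nat.Prime.dvd_mul pp).mp h with h | h
      · exact Or.inr (Or.inl ((Nat.prime_dvd_prime_iff_eq pp hq5).mp h))
      rcases (Nat.Prime.dvd_mul pp).mp h with h | h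
      · exact Or.inr (Or.inr (Or.inl ((Nat.prime_dvd_prime_iff_eq pp hq11).mp h)))
      rcases (Nat.Prime.dvd_mul pp).mp h with h | h
      · exact Or.inr (Or.inr (Or.inr (Or.inl ((Nat.prime_dvd_prime_iff_eq pp hq73).mp h))))
      rcases (Nat.Prime.dvd_mul pp).mp h with h | h
      · exact Or.inr (Or.inr (Or.inr (Or.inr (Or.inl ((Nat.prime_dvd_prime_iff_eq pp hq101).mp h)))))
      · exact Or.inr (Or.inr (Or.inr (Or.inr (Or.inr (((Nat.prime_dvd_prime_iff_eq pp hq137).mp h))))))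
    rcases hcases with rfl | rfl | rfl | rfl | rfl | rfl
    · norm_num at h3
    · norm_num at h3
    · exact no_form1 (by norm_num) 1 5050505 (by norm_num) (by norm_num) (by norm_num) (j+1) heq
    · norm_num at h3
    · norm_num at h3
    · norm_num at h3

theorem not_totient_5555555550 (x : ℕ) (hx : Nat.totient x = 5555555550) : False := by
  obtain ⟨p, k, pp, h3, heq⟩ := totient_mod4 x (by rw [hx])
  rw [hx] at heq
  cases k with
  | zero =>
    rw [pow_zero, one_mul] at heq
    have hp : p = 5555555551 := by have := pp.two_le; omega
    rw [hp] at pp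
    norm_num at pp
  | succ j =>
    have hpd : p ∣ 5555555550 := ⟨p ^ j * (p - 1), by rw [heq, pow_succ]; ring⟩
    have hpd' : p ∣ 2*(3*(3*(5*(5*(37*(333667)))))) := by norm_num at hpd ⊢; exact hpd
    have hq2 : (2:ℕ).Prime := by norm_num
    have hq3 : (3:ℕ).Prime := by norm_num
    have hq5 : (5:ℕ).Prime := by norm_num
    have hq37 : (37:ℕ).Prime := by norm_num
    have hq333667 : (333667:ℕ).Prime := by norm_num
    have hcases : p = 2 ∨ p = 3 ∨ p = 5 ∨ p = 37 ∨ p = 333667 := by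
      rcases (Nat.Prime.dvd_mul pp).mp hpd' with h | h
      · exact Or.inl ((Nat.prime_dvd_prime_iff_eq pp hq2).mp h)
      rcases (Nat.Prime.dvd_mul pp).mp h with h | h
      · exact Or.inr (Or.inl ((Nat.prime_dvd_prime_iff_eq pp hq3).mp h))
      rcases (Nat.Prime.dvd_mul pp).mp h with h | h
      · exact Or.inr (Or.inl ((Nat.prime_dvd_prime_iff_eq pp hq3).mp h))
      rcases (Nat.Prime.dvd_mul pp).mp h with h | h
      · exact Or.inr (Or.inr (Or.inl ((Nat.prime_dvd_prime_iff_eq pp hq5).mp h)))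
      rcases (Nat.Prime.dvd_mul pp).mp h with h | h
      · exact Or.inr (Or.inr (Or.inl ((Nat.prime_dvd_prime_iff_eq pp hq5).mp h)))
      rcases (Nat.Prime.dvd_mul pp).mp h with h | h
      · exact Or.inr (Or.inr (Or.inr (Or.inl ((Nat.prime_dvd_prime_iff_eq pp hq37).mp h))))
      · exact Or.inr (Or.inr (Or.inr (Or.inr (((Nat.prime_dvd_prime_iff_eq pp hq333667).mp h)))))
    rcases hcases with rfl | rfl | rfl | rfl | rfl
    · norm_num at h3
    · exact no_form1 (by norm_num) 2 308641975 (by norm_num) (by norm_num) (by norm_num) (j+1) heq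
    · norm_num at h3
    · norm_num at h3
    · exact no_form2 (by norm_num) (j+1) heq

theorem not_totient_55555555550 (x : ℕ) (hx : Nat.totient x = 55555555550) : False := by
  obtain ⟨p, k, pp, h3, heq⟩ := totient_mod4 x (by rw [hx])
  rw [hx] at heq
  cases k with
  | zero =>
    rw [pow_zero, one_mul] at heq
    have hp : p = 55555555551 := by have := pp.two_le; omega
    rw [hp] at pp
    norm_num at pp
  | succ j =>
    have hpd : p ∣ 55555555550 := ⟨p ^ j * (p - 1), by rw [heq, pow_succ]; ring⟩
    have hpd' : p ∣ 2*(5*(5*(11*(41*(271*(9091)))))) := by norm_num at hpd ⊢; exact hpd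
    have hq2 : (2:ℕ).Prime := by norm_num
    have hq5 : (5:ℕ).Prime := by norm_num
    have hq11 : (11:ℕ).Prime := by norm_num
    have hq41 : (41:ℕ).Prime := by norm_num
    have hq271 : (271:ℕ).Prime := by norm_num
    have hq9091 : (9091:ℕ).Prime := by norm_num
    have hcases : p = 2 ∨ p = 5 ∨ p = 11 ∨ p = 41 ∨ p = 271 ∨ p = 9091 := by
      rcases (Nat.Prime.dvd_mul pp).mp hpd' with h | h
      · exact Or.inl ((Nat.prime_dvd_prime_iff_eq pp hq2).mp h)
      rcases (Nat.Prime.dvd_mul pp).mp h with h | h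
      · exact Or.inr (Or.inl ((Nat.prime_dvd_prime_iff_eq pp hq5).mp h))
      rcases (Nat.Prime.dvd_mul pp).mp h with h | h
      · exact Or.inr (Or.inl ((Nat.prime_dvd_prime_iff_eq pp hq5).mp h))
      rcases (Nat.Prime.dvd_mul pp).mp h with h | h
      · exact Or.inr (Or.inr (Or.inl ((Nat.prime_dvd_prime_iff_eq pp hq11).mp h)))
      rcases (Nat.Prime.dvd_mul pp).mp h with h | h
      · exact Or.inr (Or.inr (Or.inr (Or.inl ((Nat.prime_dvd_prime_iff_eq pp hq41).mp h))))
      rcases (Nat.Prime.dvd_mul pp).mp h with h | h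
      · exact Or.inr (Or.inr (Or.inr (Or.inr (Or.inl ((Nat.prime_dvd_prime_iff_eq pp hq271).mp h)))))
      · exact Or.inr (Or.inr (Or.inr (Or.inr (Or.inr (((Nat.prime_dvd_prime_iff_eq pp hq9091).mp h))))))
    rcases hcases with rfl | rfl | rfl | rfl | rfl | rfl
    · norm_num at h3
    · norm_num at h3
    · exact no_form1 (by norm_num) 1 505050505 (by norm_num) (by norm_num) (by norm_num) (j+1) heq
    · norm_num at h3
    · exact no_form2 (by norm_num) (j+1) heq
    · exact no_form2 (by norm_num) (j+1) heq



theorem not_totient_small {n x : ℕ} (hx : Nat.totient x = n) (h1 : 1 < n) : n % 2 = 0 := by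
  rcases Nat.lt_or_ge x 3 with h | h
  · interval_cases x <;> simp_all [Nat.totient_zero, Nat.totient_one, Nat.totient_two] <;> omega
  · have := Nat.totient_even h
    rw [Nat.even_iff, hx] at this
    omega

theorem ofDigits_le_of_sublist {l1 l2 : List ℕ} (h : l1.Sublist l2) :
    Nat.ofDigits 10 l1 ≤ Nat.ofDigits 10 l2 := by
  induction h with
  | slnil => exact le_refl _
  | @cons l₁ l₂ a h ih =>
    calc Nat.ofDigits 10 l₁ ≤ Nat.ofDigits 10 l₂ := ih
    _ ≤ a + 10 * Nat.ofDigits 10 l₂ := by omega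
    _ = Nat.ofDigits 10 (a :: l₂) := (Nat.ofDigits_cons).symm
  | @cons_cons l₁ l₂ a h ih =>
    rw [Nat.ofDigits_cons, Nat.ofDigits_cons]
    omega

theorem subseq_le {t s : ℕ} (h : Subseq t s) : t ≤ s := by
  have := ofDigits_le_of_sublist h
  rwa [Nat.ofDigits_digits, Nat.ofDigits_digits] at this

theorem mem_of_subseq {n t : ℕ} (h : Subseq n t) :
    n ∈ ((Nat.digits 10 t).sublists.map (Nat.ofDigits 10)) := by
  rw [← Nat.ofDigits_digits 10 n]
  exact List.mem_map_of_mem (List.mem_sublists.mpr h)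

theorem tot_big : Nat.totient 555555555551 = 555555555550 := by
  rw [Nat.totient_prime bigprime]

theorem minimalSet_totient_values :
    minimalSet {n : ℕ | 1 ≤ n ∧ ∃ x : ℕ, 1 ≤ x ∧ Nat.totient x = n} =
      {1, 2, 4, 6, 8, 30, 70, 500, 900, 990, 5590, 9550, 555555555550} := by
  ext s
  simp only [minimalSet, Set.mem_setOf_eq, Set.mem_insert_iff, Set.mem_singleton_iff]
  constructor

  · rintro ⟨⟨hs1, x, hx1, hx⟩, hmin⟩
    by_contra hnot
    push_neg at hnot
    obtain ⟨ne1, ne2, ne4, ne6, ne8, ne30, ne70, ne500, ne900, ne990, ne5590, ne9550, neBig⟩ := hnot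
    have key : ∀ t y : ℕ, 1 ≤ t → 1 ≤ y → Nat.totient y = t → t < s → Subseq t s → False := by
      intro t y h1 h2 h3 hlt hsub
      exact hmin ⟨t, ⟨h1, y, h2, h3⟩, hlt, hsub⟩
    have hs2 : s % 2 = 0 := not_totient_small hx (by omega)
    have hs10 : 10 ≤ s := by
      by_contra hlt10
      push_neg at hlt10
      interval_cases s <;> omega
    have hnd : ∀ d y : ℕ, 1 ≤ y → Nat.totient y = d → 1 ≤ d → d < 10 → d ∉ Nat.digits 10 s := by
      intro d y hy1 hy hd1 hd10 hmem
      refine key d y hd1 hy1 hy (by omega) ?_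
      show (Nat.digits 10 d).Sublist (Nat.digits 10 s)
      rw [Nat.digits_def' (by norm_num : (1:ℕ)<10) (by omega : 0 < d),
        Nat.mod_eq_of_lt hd10, Nat.div_eq_of_lt hd10]
      simpa using List.singleton_sublist.mpr hmem
    have h1n : 1 ∉ Nat.digits 10 s := hnd 1 1 le_rfl Nat.totient_one le_rfl (by norm_num)
    have h2n : 2 ∉ Nat.digits 10 s :=
      hnd 2 3 (by norm_num) (by rw [Nat.totient_prime (by norm_num)]) (by norm_num) (by norm_num)
    have h4n : 4 ∉ Nat.digits 10 s :=
      hnd 4 5 (by norm_num) (by rw [Nat.totient_prime (by norm_num)]) (by norm_num) (by norm_num)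
    have h6n : 6 ∉ Nat.digits 10 s :=
      hnd 6 7 (by norm_num) (by rw [Nat.totient_prime (by norm_num)]) (by norm_num) (by norm_num)
    have h8n : 8 ∉ Nat.digits 10 s :=
      hnd 8 15 (by norm_num) (by decide) (by norm_num) (by norm_num)
    have hdig : ∀ d ∈ Nat.digits 10 s, d = 0 ∨ d = 3 ∨ d = 5 ∨ d = 7 ∨ d = 9 := by
      intro d hd
      have hlt : d < 10 := Nat.digits_lt_base (by norm_num) hd
      interval_cases d
      · norm_num
      · exact absurd hd h1n
      · exact absurd hd h2n
      · norm_num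
      · exact absurd hd h4n
      · norm_num
      · exact absurd hd h6n
      · norm_num
      · exact absurd hd h8n
      · norm_num
    have hmem0 : s % 10 ∈ Nat.digits 10 s := by
      rw [Nat.digits_def' (by norm_num : (1:ℕ)<10) (by omega : 0 < s)]
      exact List.mem_cons_self
    have hmod0 : s % 10 = 0 := by
      have := hdig (s % 10) hmem0
      omega
    have hL : Nat.digits 10 s = 0 :: Nat.digits 10 (s / 10) := by
      rw [Nat.digits_def' (by norm_num : (1:ℕ)<10) (by omega : 0 < s), hmod0]
    have hs10' : s / 10 ≠ 0 := by omega
    have hTne : Nat.digits 10 (s / 10) ≠ [] := Nat.digits_ne_nil_iff_ne_zero.mpr hs10'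
    have hdigT : ∀ d ∈ Nat.digits 10 (s / 10), d = 0 ∨ d = 3 ∨ d = 5 ∨ d = 7 ∨ d = 9 :=
      fun d hd => hdig d (by rw [hL]; exact List.mem_cons_of_mem _ hd)
    by_cases h3T : 3 ∈ Nat.digits 10 (s / 10)
    · have hsub : Subseq 30 s := by
        show (Nat.digits 10 30).Sublist (Nat.digits 10 s)
        rw [hL, show Nat.digits 10 30 = [0,3] from by norm_num]
        exact List.cons_sublist_cons.mpr (List.singleton_sublist.mpr h3T)
      exact key 30 31 (by norm_num) (by norm_num) (by rw [Nat.totient_prime (by norm_num)])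
        (by have := subseq_le hsub; omega) hsub
    by_cases h7T : 7 ∈ Nat.digits 10 (s / 10)
    · have hsub : Subseq 70 s := by
        show (Nat.digits 10 70).Sublist (Nat.digits 10 s)
        rw [hL, show Nat.digits 10 70 = [0,7] from by norm_num]
        exact List.cons_sublist_cons.mpr (List.singleton_sublist.mpr h7T)
      exact key 70 71 (by norm_num) (by norm_num) (by rw [Nat.totient_prime (by norm_num)])
        (by have := subseq_le hsub; omega) hsub
    have hdigT' : ∀ d ∈ Nat.digits 10 (s / 10), d = 0 ∨ d = 5 ∨ d = 9 := by
      intro d hd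
      rcases hdigT d hd with h | h | h | h | h
      · exact Or.inl h
      · subst h; exact absurd hd h3T
      · exact Or.inr (Or.inl h)
      · subst h; exact absurd hd h7T
      · exact Or.inr (Or.inr h)
    by_cases h0T : 0 ∈ Nat.digits 10 (s / 10)
    · -- two zero digits: 500 or 900
      have hlast : (Nat.digits 10 (s / 10)).getLast hTne ≠ 0 :=
        Nat.getLast_digit_ne_zero 10 hs10'
      have hlmem : (Nat.digits 10 (s / 10)).getLast hTne ∈ Nat.digits 10 (s / 10) :=
        List.getLast_mem hTne
      have hl59 : (Nat.digits 10 (s / 10)).getLast hTne = 5 ∨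
          (Nat.digits 10 (s / 10)).getLast hTne = 9 := by
        rcases hdigT' _ hlmem with h | h | h
        · exact absurd h hlast
        · exact Or.inl h
        · exact Or.inr h
      have hTsplit : (Nat.digits 10 (s / 10)).dropLast ++
          [(Nat.digits 10 (s / 10)).getLast hTne] = Nat.digits 10 (s / 10) :=
        List.dropLast_append_getLast hTne
      have h0dl : 0 ∈ (Nat.digits 10 (s / 10)).dropLast := by
        have h0' := h0T
        rw [← hTsplit] at h0'
        rcases List.mem_append.mp h0' with h | h
        · exact h
        · simp only [List.mem_singleton] at h
          exact absurd h.symm hlast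
      have hsubT : [0, (Nat.digits 10 (s / 10)).getLast hTne].Sublist
          (Nat.digits 10 (s / 10)) := by
        have hstep : ([0] ++ [(Nat.digits 10 (s / 10)).getLast hTne]).Sublist
            ((Nat.digits 10 (s / 10)).dropLast ++ [(Nat.digits 10 (s / 10)).getLast hTne]) :=
          List.Sublist.append (List.singleton_sublist.mpr h0dl) (List.Sublist.refl _)
        rw [hTsplit] at hstep
        exact hstep
      rcases hl59 with h | h
      · rw [h] at hsubT
        have hsub : Subseq 500 s := by
          show (Nat.digits 10 500).Sublist (Nat.digits 10 s)
          rw [hL, show Nat.digits 10 500 = [0,0,5] from by norm_num]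
          exact List.cons_sublist_cons.mpr hsubT
        exact key 500 625 (by norm_num) (by norm_num)
          (by rw [show (625:ℕ) = 5^4 from rfl, Nat.totient_prime_pow (by norm_num) (by norm_num)]; norm_num)
          (by have := subseq_le hsub; omega) hsub
      · rw [h] at hsubT
        have hsub : Subseq 900 s := by
          show (Nat.digits 10 900).Sublist (Nat.digits 10 s)
          rw [hL, show Nat.digits 10 900 = [0,0,9] from by norm_num]
          exact List.cons_sublist_cons.mpr hsubT
        exact key 900 1057 (by norm_num) (by norm_num)
          (by rw [show (1057:ℕ) = 7*151 from rfl, Nat.totient_mul (by norm_num),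
            Nat.totient_prime (by norm_num), Nat.totient_prime (by norm_num)])
          (by have := subseq_le hsub; omega) hsub
    -- now all digits of s/10 are 5 or 9
    have hdigT'' : ∀ d ∈ Nat.digits 10 (s / 10), d = 5 ∨ d = 9 := by
      intro d hd
      rcases hdigT' d hd with h | h | h
      · subst h; exact absurd hd h0T
      · exact Or.inl h
      · exact Or.inr h
    rcases Nat.lt_or_ge (List.count 9 (Nat.digits 10 (s / 10))) 2 with hc | hc
    · have hc01 : List.count 9 (Nat.digits 10 (s / 10)) = 0 ∨
          List.count 9 (Nat.digits 10 (s / 10)) = 1 := by omega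
      rcases hc01 with hc0 | hc1
      · -- no nines: all fives
        have h9T : 9 ∉ Nat.digits 10 (s / 10) := List.count_eq_zero.mp hc0
        have hall5 : ∀ d ∈ Nat.digits 10 (s / 10), d = 5 := by
          intro d hd
          rcases hdigT'' d hd with h | h
          · exact h
          · subst h; exact absurd hd h9T
        have hrep := List.eq_replicate_of_mem hall5
        obtain ⟨n, hn⟩ : ∃ n, (Nat.digits 10 (s / 10)).length = n := ⟨_, rfl⟩
        rw [hn] at hrep
        have hn1 : 1 ≤ n := by
          rcases Nat.eq_zero_or_pos n with h0 | h1
          · rw [h0] at hrep; simp at hrep; exact absurd hrep hTne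
          · exact h1
        have hsval : s = Nat.ofDigits 10 (0 :: List.replicate n 5) := by
          conv_lhs => rw [← Nat.ofDigits_digits 10 s, hL, hrep]
        rcases Nat.lt_or_ge n 11 with hn11 | hn11
        · interval_cases n
          · rw [show Nat.ofDigits 10 (0 :: List.replicate 1 5) = 50 from by decide] at hsval
            rw [hsval] at hx
            exact not_totient_50 x hx
          · rw [show Nat.ofDigits 10 (0 :: List.replicate 2 5) = 550 from by decide] at hsval
            rw [hsval] at hx
            exact not_totient_550 x hx
          · rw [show Nat.ofDigits 10 (0 :: List.replicate 3 5) = 5550 from by decide] at hsval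
            rw [hsval] at hx
            exact not_totient_5550 x hx
          · rw [show Nat.ofDigits 10 (0 :: List.replicate 4 5) = 55550 from by decide] at hsval
            rw [hsval] at hx
            exact not_totient_55550 x hx
          · rw [show Nat.ofDigits 10 (0 :: List.replicate 5 5) = 555550 from by decide] at hsval
            rw [hsval] at hx
            exact not_totient_555550 x hx
          · rw [show Nat.ofDigits 10 (0 :: List.replicate 6 5) = 5555550 from by decide] at hsval
            rw [hsval] at hx
            exact not_totient_5555550 x hx
          · rw [show Nat.ofDigits 10 (0 :: List.replicate 7 5) = 55555550 from by decide] at hsval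
            rw [hsval] at hx
            exact not_totient_55555550 x hx
          · rw [show Nat.ofDigits 10 (0 :: List.replicate 8 5) = 555555550 from by decide] at hsval
            rw [hsval] at hx
            exact not_totient_555555550 x hx
          · rw [show Nat.ofDigits 10 (0 :: List.replicate 9 5) = 5555555550 from by decide] at hsval
            rw [hsval] at hx
            exact not_totient_5555555550 x hx
          · rw [show Nat.ofDigits 10 (0 :: List.replicate 10 5) = 55555555550 from by decide] at hsval
            rw [hsval] at hx
            exact not_totient_55555555550 x hx
        · -- n ≥ 11 : subsequence 555555555550
          have hsub : Subseq 555555555550 s := by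
            show (Nat.digits 10 555555555550).Sublist (Nat.digits 10 s)
            rw [hL, hrep, show Nat.digits 10 555555555550 = 0 :: List.replicate 11 5 from by
              rw [show (0 :: List.replicate 11 5 : List ℕ) = [0,5,5,5,5,5,5,5,5,5,5,5] from by decide]; norm_num]
            exact List.cons_sublist_cons.mpr ((List.replicate_sublist_replicate 5).mpr (by omega))
          exact key 555555555550 555555555551 (by norm_num) (by norm_num) tot_big
            (by have := subseq_le hsub; omega) hsub
      · -- exactly one nine
        have h9T : 9 ∈ Nat.digits 10 (s / 10) := by
          by_contra h9
          have := List.count_eq_zero.mpr h9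
          omega
        obtain ⟨A, B, hAB⟩ := List.append_of_mem h9T
        have hcnt := hc1
        rw [hAB, List.count_append, List.count_cons] at hcnt
        simp at hcnt
        have h9A : 9 ∉ A := List.count_eq_zero.mp (by omega)
        have h9B : 9 ∉ B := List.count_eq_zero.mp (by omega)
        have hallA : ∀ d ∈ A, d = 5 := by
          intro d hd
          have hdT : d ∈ Nat.digits 10 (s / 10) := by
            rw [hAB]; exact List.mem_append.mpr (Or.inl hd)
          rcases hdigT'' d hdT with h | h
          · exact h
          · subst h; exact absurd hd h9A
        have hallB : ∀ d ∈ B, d = 5 := by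
          intro d hd
          have hdT : d ∈ Nat.digits 10 (s / 10) := by
            rw [hAB]; exact List.mem_append.mpr (Or.inr (List.mem_cons_of_mem _ hd))
          rcases hdigT'' d hdT with h | h
          · exact h
          · subst h; exact absurd hd h9B
        have hArep := List.eq_replicate_of_mem hallA
        have hBrep := List.eq_replicate_of_mem hallB
        by_cases hb2 : 2 ≤ B.length
        · -- 5590
          have hsubT : [9,5,5].Sublist (Nat.digits 10 (s / 10)) := by
            rw [hAB]
            refine List.Sublist.trans ?_ (List.sublist_append_right A (9 :: B))
            refine List.cons_sublist_cons.mpr ?_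
            conv_rhs => rw [hBrep]
            exact (List.replicate_sublist_replicate 5).mpr hb2
          have hsub : Subseq 5590 s := by
            show (Nat.digits 10 5590).Sublist (Nat.digits 10 s)
            rw [hL, show Nat.digits 10 5590 = [0,9,5,5] from by norm_num]
            exact List.cons_sublist_cons.mpr hsubT
          exact key 5590 5591 (by norm_num) (by norm_num)
            (by rw [Nat.totient_prime (by norm_num)])
            (by have := subseq_le hsub; omega) hsub
        by_cases ha2 : 2 ≤ A.length
        · -- 9550
          have hsubT : [5,5,9].Sublist (Nat.digits 10 (s / 10)) := by
            rw [hAB]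
            have : ([5,5] ++ [9]).Sublist (A ++ 9 :: B) := by
              refine List.Sublist.append ?_ (List.cons_sublist_cons.mpr (List.nil_sublist B))
              conv_rhs => rw [hArep]
              exact (List.replicate_sublist_replicate 5).mpr ha2
            exact this
          have hsub : Subseq 9550 s := by
            show (Nat.digits 10 9550).Sublist (Nat.digits 10 s)
            rw [hL, show Nat.digits 10 9550 = [0,5,5,9] from by norm_num]
            exact List.cons_sublist_cons.mpr hsubT
          exact key 9550 9551 (by norm_num) (by norm_num)
            (by rw [Nat.totient_prime (by norm_num)])
            (by have := subseq_le hsub; omega) hsub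
        · -- small cases 90, 590, 950, 5950
          push_neg at hb2 ha2
          have hsval : s = Nat.ofDigits 10 (0 :: (A ++ 9 :: B)) := by
            conv_lhs => rw [← Nat.ofDigits_digits 10 s, hL, hAB]
          have haval : A.length = 0 ∨ A.length = 1 := by omega
          have hbval : B.length = 0 ∨ B.length = 1 := by omega
          rcases haval with ha | ha <;> rcases hbval with hb | hb <;>
            rw [hArep, ha] at hsval <;> rw [hBrep, hb] at hsval
          · rw [show Nat.ofDigits 10 (0 :: (List.replicate 0 5 ++ 9 :: List.replicate 0 5)) = 90 from by decide] at hsval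
            rw [hsval] at hx
            exact not_totient_90 x hx
          · rw [show Nat.ofDigits 10 (0 :: (List.replicate 0 5 ++ 9 :: List.replicate 1 5)) = 590 from by decide] at hsval
            rw [hsval] at hx
            exact not_totient_590 x hx
          · rw [show Nat.ofDigits 10 (0 :: (List.replicate 1 5 ++ 9 :: List.replicate 0 5)) = 950 from by decide] at hsval
            rw [hsval] at hx
            exact not_totient_950 x hx
          · rw [show Nat.ofDigits 10 (0 :: (List.replicate 1 5 ++ 9 :: List.replicate 1 5)) = 5950 from by decide] at hsval
            rw [hsval] at hx
            exact not_totient_5950 x hx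
    · -- two or more nines: 990
      have hsubT : [9,9].Sublist (Nat.digits 10 (s / 10)) :=
        List.replicate_sublist_iff.mpr hc
      have hsub : Subseq 990 s := by
        show (Nat.digits 10 990).Sublist (Nat.digits 10 s)
        rw [hL, show Nat.digits 10 990 = [0,9,9] from by norm_num]
        exact List.cons_sublist_cons.mpr hsubT
      exact key 990 991 (by norm_num) (by norm_num)
        (by rw [Nat.totient_prime (by norm_num)])
        (by have := subseq_le hsub; omega) hsub

  · rintro (rfl | rfl | rfl | rfl | rfl | rfl | rfl | rfl | rfl | rfl | rfl | rfl | rfl)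
    · -- t = 1
      refine ⟨⟨by norm_num, 1, by norm_num, Nat.totient_one⟩, ?_⟩
      rintro ⟨n, ⟨hn1, y, hy1, hy⟩, hlt, hsub⟩
      have h2 := List.mem_dedup.mpr (mem_of_subseq hsub)
      rw [show Nat.digits 10 1 = [1] from by norm_num] at h2
      rw [show ((([1]:List ℕ).sublists.map (Nat.ofDigits 10)).dedup) = [0, 1] from by decide] at h2
      simp only [List.mem_cons, List.not_mem_nil, or_false] at h2
      rcases h2 with rfl | rfl
      · exact absurd hn1 (by norm_num)
      · exact absurd hlt (lt_irrefl _)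
    · -- t = 2
      refine ⟨⟨by norm_num, 3, by norm_num, (by rw [Nat.totient_prime (by norm_num)])⟩, ?_⟩
      rintro ⟨n, ⟨hn1, y, hy1, hy⟩, hlt, hsub⟩
      have h2 := List.mem_dedup.mpr (mem_of_subseq hsub)
      rw [show Nat.digits 10 2 = [2] from by norm_num] at h2
      rw [show ((([2]:List ℕ).sublists.map (Nat.ofDigits 10)).dedup) = [0, 2] from by decide] at h2
      simp only [List.mem_cons, List.not_mem_nil, or_false] at h2
      rcases h2 with rfl | rfl
      · exact absurd hn1 (by norm_num)
      · exact absurd hlt (lt_irrefl _)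
    · -- t = 4
      refine ⟨⟨by norm_num, 5, by norm_num, (by rw [Nat.totient_prime (by norm_num)])⟩, ?_⟩
      rintro ⟨n, ⟨hn1, y, hy1, hy⟩, hlt, hsub⟩
      have h2 := List.mem_dedup.mpr (mem_of_subseq hsub)
      rw [show Nat.digits 10 4 = [4] from by norm_num] at h2
      rw [show ((([4]:List ℕ).sublists.map (Nat.ofDigits 10)).dedup) = [0, 4] from by decide] at h2
      simp only [List.mem_cons, List.not_mem_nil, or_false] at h2
      rcases h2 with rfl | rfl
      · exact absurd hn1 (by norm_num)
      · exact absurd hlt (lt_irrefl _)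
    · -- t = 6
      refine ⟨⟨by norm_num, 7, by norm_num, (by rw [Nat.totient_prime (by norm_num)])⟩, ?_⟩
      rintro ⟨n, ⟨hn1, y, hy1, hy⟩, hlt, hsub⟩
      have h2 := List.mem_dedup.mpr (mem_of_subseq hsub)
      rw [show Nat.digits 10 6 = [6] from by norm_num] at h2
      rw [show ((([6]:List ℕ).sublists.map (Nat.ofDigits 10)).dedup) = [0, 6] from by decide] at h2
      simp only [List.mem_cons, List.not_mem_nil, or_false] at h2
      rcases h2 with rfl | rfl
      · exact absurd hn1 (by norm_num)
      · exact absurd hlt (lt_irrefl _)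
    · -- t = 8
      refine ⟨⟨by norm_num, 15, by norm_num, (by decide)⟩, ?_⟩
      rintro ⟨n, ⟨hn1, y, hy1, hy⟩, hlt, hsub⟩
      have h2 := List.mem_dedup.mpr (mem_of_subseq hsub)
      rw [show Nat.digits 10 8 = [8] from by norm_num] at h2
      rw [show ((([8]:List ℕ).sublists.map (Nat.ofDigits 10)).dedup) = [0, 8] from by decide] at h2
      simp only [List.mem_cons, List.not_mem_nil, or_false] at h2
      rcases h2 with rfl | rfl
      · exact absurd hn1 (by norm_num)
      · exact absurd hlt (lt_irrefl _)
    · -- t = 30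
      refine ⟨⟨by norm_num, 31, by norm_num, (by rw [Nat.totient_prime (by norm_num)])⟩, ?_⟩
      rintro ⟨n, ⟨hn1, y, hy1, hy⟩, hlt, hsub⟩
      have h2 := List.mem_dedup.mpr (mem_of_subseq hsub)
      rw [show Nat.digits 10 30 = [0, 3] from by norm_num] at h2
      rw [show ((([0, 3]:List ℕ).sublists.map (Nat.ofDigits 10)).dedup) = [0, 3, 30] from by decide] at h2
      simp only [List.mem_cons, List.not_mem_nil, or_false] at h2
      rcases h2 with rfl | rfl | rfl
      · exact absurd hn1 (by norm_num)
      · exact absurd (not_totient_small hy (by norm_num)) (by norm_num)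
      · exact absurd hlt (lt_irrefl _)
    · -- t = 70
      refine ⟨⟨by norm_num, 71, by norm_num, (by rw [Nat.totient_prime (by norm_num)])⟩, ?_⟩
      rintro ⟨n, ⟨hn1, y, hy1, hy⟩, hlt, hsub⟩
      have h2 := List.mem_dedup.mpr (mem_of_subseq hsub)
      rw [show Nat.digits 10 70 = [0, 7] from by norm_num] at h2
      rw [show ((([0, 7]:List ℕ).sublists.map (Nat.ofDigits 10)).dedup) = [0, 7, 70] from by decide] at h2
      simp only [List.mem_cons, List.not_mem_nil, or_false] at h2
      rcases h2 with rfl | rfl | rfl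
      · exact absurd hn1 (by norm_num)
      · exact absurd (not_totient_small hy (by norm_num)) (by norm_num)
      · exact absurd hlt (lt_irrefl _)
    · -- t = 500
      refine ⟨⟨by norm_num, 625, by norm_num, (by rw [show (625:ℕ) = 5^4 from rfl, Nat.totient_prime_pow (by norm_num) (by norm_num)]; norm_num)⟩, ?_⟩
      rintro ⟨n, ⟨hn1, y, hy1, hy⟩, hlt, hsub⟩
      have h2 := List.mem_dedup.mpr (mem_of_subseq hsub)
      rw [show Nat.digits 10 500 = [0, 0, 5] from by norm_num] at h2
      rw [show ((([0, 0, 5]:List ℕ).sublists.map (Nat.ofDigits 10)).dedup) = [0, 5, 50, 500] from by decide] at h2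
      simp only [List.mem_cons, List.not_mem_nil, or_false] at h2
      rcases h2 with rfl | rfl | rfl | rfl
      · exact absurd hn1 (by norm_num)
      · exact absurd (not_totient_small hy (by norm_num)) (by norm_num)
      · exact not_totient_50 y hy
      · exact absurd hlt (lt_irrefl _)
    · -- t = 900
      refine ⟨⟨by norm_num, 1057, by norm_num, (by rw [show (1057:ℕ) = 7*151 from rfl, Nat.totient_mul (by norm_num), Nat.totient_prime (by norm_num), Nat.totient_prime (by norm_num)])⟩, ?_⟩
      rintro ⟨n, ⟨hn1, y, hy1, hy⟩, hlt, hsub⟩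
      have h2 := List.mem_dedup.mpr (mem_of_subseq hsub)
      rw [show Nat.digits 10 900 = [0, 0, 9] from by norm_num] at h2
      rw [show ((([0, 0, 9]:List ℕ).sublists.map (Nat.ofDigits 10)).dedup) = [0, 9, 90, 900] from by decide] at h2
      simp only [List.mem_cons, List.not_mem_nil, or_false] at h2
      rcases h2 with rfl | rfl | rfl | rfl
      · exact absurd hn1 (by norm_num)
      · exact absurd (not_totient_small hy (by norm_num)) (by norm_num)
      · exact not_totient_90 y hy
      · exact absurd hlt (lt_irrefl _)
    · -- t = 990
      refine ⟨⟨by norm_num, 991, by norm_num, (by rw [Nat.totient_prime (by norm_num)])⟩, ?_⟩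
      rintro ⟨n, ⟨hn1, y, hy1, hy⟩, hlt, hsub⟩
      have h2 := List.mem_dedup.mpr (mem_of_subseq hsub)
      rw [show Nat.digits 10 990 = [0, 9, 9] from by norm_num] at h2
      rw [show ((([0, 9, 9]:List ℕ).sublists.map (Nat.ofDigits 10)).dedup) = [0, 9, 90, 99, 990] from by decide] at h2
      simp only [List.mem_cons, List.not_mem_nil, or_false] at h2
      rcases h2 with rfl | rfl | rfl | rfl | rfl
      · exact absurd hn1 (by norm_num)
      · exact absurd (not_totient_small hy (by norm_num)) (by norm_num)
      · exact not_totient_90 y hy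
      · exact absurd (not_totient_small hy (by norm_num)) (by norm_num)
      · exact absurd hlt (lt_irrefl _)
    · -- t = 5590
      refine ⟨⟨by norm_num, 5591, by norm_num, (by rw [Nat.totient_prime (by norm_num)])⟩, ?_⟩
      rintro ⟨n, ⟨hn1, y, hy1, hy⟩, hlt, hsub⟩
      have h2 := List.mem_dedup.mpr (mem_of_subseq hsub)
      rw [show Nat.digits 10 5590 = [0, 9, 5, 5] from by norm_num] at h2
      rw [show ((([0, 9, 5, 5]:List ℕ).sublists.map (Nat.ofDigits 10)).dedup) = [0, 9, 90, 5, 50, 59, 590, 55, 550, 559, 5590] from by decide] at h2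
      simp only [List.mem_cons, List.not_mem_nil, or_false] at h2
      rcases h2 with rfl | rfl | rfl | rfl | rfl | rfl | rfl | rfl | rfl | rfl | rfl
      · exact absurd hn1 (by norm_num)
      · exact absurd (not_totient_small hy (by norm_num)) (by norm_num)
      · exact not_totient_90 y hy
      · exact absurd (not_totient_small hy (by norm_num)) (by norm_num)
      · exact not_totient_50 y hy
      · exact absurd (not_totient_small hy (by norm_num)) (by norm_num)
      · exact not_totient_590 y hy
      · exact absurd (not_totient_small hy (by norm_num)) (by norm_num)
      · exact not_totient_550 y hy
      · exact absurd (not_totient_small hy (by norm_num)) (by norm_num)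
      · exact absurd hlt (lt_irrefl _)
    · -- t = 9550
      refine ⟨⟨by norm_num, 9551, by norm_num, (by rw [Nat.totient_prime (by norm_num)])⟩, ?_⟩
      rintro ⟨n, ⟨hn1, y, hy1, hy⟩, hlt, hsub⟩
      have h2 := List.mem_dedup.mpr (mem_of_subseq hsub)
      rw [show Nat.digits 10 9550 = [0, 5, 5, 9] from by norm_num] at h2
      rw [show ((([0, 5, 5, 9]:List ℕ).sublists.map (Nat.ofDigits 10)).dedup) = [0, 5, 50, 55, 550, 9, 90, 95, 950, 955, 9550] from by decide] at h2
      simp only [List.mem_cons, List.not_mem_nil, or_false] at h2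
      rcases h2 with rfl | rfl | rfl | rfl | rfl | rfl | rfl | rfl | rfl | rfl | rfl
      · exact absurd hn1 (by norm_num)
      · exact absurd (not_totient_small hy (by norm_num)) (by norm_num)
      · exact not_totient_50 y hy
      · exact absurd (not_totient_small hy (by norm_num)) (by norm_num)
      · exact not_totient_550 y hy
      · exact absurd (not_totient_small hy (by norm_num)) (by norm_num)
      · exact not_totient_90 y hy
      · exact absurd (not_totient_small hy (by norm_num)) (by norm_num)
      · exact not_totient_950 y hy
      · exact absurd (not_totient_small hy (by norm_num)) (by norm_num)
      · exact absurd hlt (lt_irrefl _)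
    · -- t = 555555555550
      refine ⟨⟨by norm_num, 555555555551, by norm_num, tot_big⟩, ?_⟩
      rintro ⟨n, ⟨hn1, y, hy1, hy⟩, hlt, hsub⟩
      have hsub' : (Nat.digits 10 n).Sublist (0 :: List.replicate 11 5) := by
        rw [show (0 :: List.replicate 11 5 : List ℕ) = [0,5,5,5,5,5,5,5,5,5,5,5] from by decide]
        rw [← show Nat.digits 10 555555555550 = [0,5,5,5,5,5,5,5,5,5,5,5] from by norm_num]
        exact hsub
      rcases List.sublist_cons_iff.mp hsub' with h | ⟨r, hr, hrs⟩
      · obtain ⟨j, hj, hrep⟩ := List.sublist_replicate_iff.mp h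
        cases j with
        | zero =>
          rw [show List.replicate 0 5 = ([]:List ℕ) from rfl, Nat.digits_eq_nil_iff_eq_zero] at hrep
          omega
        | succ i =>
          have hval : n = Nat.ofDigits 10 (List.replicate (i+1) 5) := by
            rw [← Nat.ofDigits_digits 10 n, hrep]
          rw [List.replicate_succ, Nat.ofDigits_cons] at hval
          have h1n : 1 < n := by omega
          have := not_totient_small hy h1n
          omega
      · obtain ⟨j, hj, hrep⟩ := List.sublist_replicate_iff.mp hrs
        rw [hrep] at hr
        have hval : n = Nat.ofDigits 10 (0 :: List.replicate j 5) := by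
          rw [← Nat.ofDigits_digits 10 n, hr]
        interval_cases j
        · rw [show Nat.ofDigits 10 (0 :: List.replicate 0 5) = 0 from by decide] at hval; omega
        · rw [show Nat.ofDigits 10 (0 :: List.replicate 1 5) = 50 from by decide] at hval
          rw [hval] at hy
          exact not_totient_50 y hy
        · rw [show Nat.ofDigits 10 (0 :: List.replicate 2 5) = 550 from by decide] at hval
          rw [hval] at hy
          exact not_totient_550 y hy
        · rw [show Nat.ofDigits 10 (0 :: List.replicate 3 5) = 5550 from by decide] at hval
          rw [hval] at hy
          exact not_totient_5550 y hy
        · rw [show Nat.ofDigits 10 (0 :: List.replicate 4 5) = 55550 from by decide] at hval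
          rw [hval] at hy
          exact not_totient_55550 y hy
        · rw [show Nat.ofDigits 10 (0 :: List.replicate 5 5) = 555550 from by decide] at hval
          rw [hval] at hy
          exact not_totient_555550 y hy
        · rw [show Nat.ofDigits 10 (0 :: List.replicate 6 5) = 5555550 from by decide] at hval
          rw [hval] at hy
          exact not_totient_5555550 y hy
        · rw [show Nat.ofDigits 10 (0 :: List.replicate 7 5) = 55555550 from by decide] at hval
          rw [hval] at hy
          exact not_totient_55555550 y hy
        · rw [show Nat.ofDigits 10 (0 :: List.replicate 8 5) = 555555550 from by decide] at hval
          rw [hval] at hy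
          exact not_totient_555555550 y hy
        · rw [show Nat.ofDigits 10 (0 :: List.replicate 9 5) = 5555555550 from by decide] at hval
          rw [hval] at hy
          exact not_totient_5555555550 y hy
        · rw [show Nat.ofDigits 10 (0 :: List.replicate 10 5) = 55555555550 from by decide] at hval
          rw [hval] at hy
          exact not_totient_55555555550 y hy
        · rw [show Nat.ofDigits 10 (0 :: List.replicate 11 5) = 555555555550 from by decide] at hval; omega
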